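/- arXiv:2202.09295 — 3 statements merged into one kernel-verified Lean document; each statement's English description precedes it below -/
import Mathlib

section
/- Let (X,d,μ) be a locally compact metric measure space. Then for every Lipschitz function u : X → ℝ with Lipschitz constant Lip(u), every compactly supported continuous function φ on X, and every r > 0: |∫_X φ · (Δ_{μ,r}u − Δ̃_{μ,r}u) dμ| ≤ (Lip(u)/2) ∫_X |φ| · (z_r/r) dμ, where the right-hand side may be +∞. -/
open MeasureTheory Filter Metric Set
open scoped ENNReal Topology NNReal

/-- The AMV `r`-operator for a continuous function (`u*(x) = u(x)`). -/
noncomputable def amvOp {X : Type*} [MetricSpace X] [MeasurableSpace X]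
    (μ : Measure X) (u : X → ℝ) (x : X) (r : ℝ) : ℝ :=
  (1 / r ^ 2) * ⨍ y in ball x r, (u y - u x) ∂μ

/-- The SAMV `r`-operator for a continuous function (`u*(x) = u(x)`). -/
noncomputable def samvOp {X : Type*} [MetricSpace X] [MeasurableSpace X]
    (μ : Measure X) (u : X → ℝ) (x : X) (r : ℝ) : ℝ :=
  (1 / (2 * r ^ 2)) *
    ⨍ y in ball x r, (u y - u x) * (1 + (μ (ball x r)).toReal / (μ (ball y r)).toReal) ∂μ

/-- The averaged absolute distortion `z_r(x) = ⨍_{B_r(x)} |1 − μ(B_r(x))/μ(B_r(y))| dμ(y)`. -/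
noncomputable def zr {X : Type*} [MetricSpace X] [MeasurableSpace X]
    (μ : Measure X) (x : X) (r : ℝ) : ℝ :=
  ⨍ y in ball x r, |1 - (μ (ball x r)).toReal / (μ (ball y r)).toReal| ∂μ

lemma measurable_measureBall {X : Type*} [MetricSpace X] [MeasurableSpace X] [BorelSpace X]
    (μ : Measure X) (r : ℝ) : Measurable fun y => μ (ball y r) := by
  apply LowerSemicontinuous.measurable
  intro y c hc
  have hU : ball y r = ⋃ n : ℕ, ball y (r - 1/(n+1)) := by
    ext z
    simp only [mem_ball, mem_iUnion]
    constructor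
    · intro hz
      obtain ⟨n, hn⟩ := exists_nat_one_div_lt (sub_pos.mpr hz)
      exact ⟨n, by linarith⟩
    · rintro ⟨n, hn⟩
      have : (0:ℝ) < 1/(n+1) := by positivity
      linarith
  have hmono : Monotone fun n : ℕ => ball y (r - 1/(n+1)) := by
    intro m n hmn
    apply ball_subset_ball
    have h2 : (1:ℝ)/(n+1) ≤ 1/(m+1) := by
      apply one_div_le_one_div_of_le (by positivity)
      have : (m:ℝ) ≤ n := Nat.cast_le.mpr hmn
      linarith
    linarith
  simp only at hc ⊢
  rw [hU, hmono.measure_iUnion] at hc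
  obtain ⟨n, hn⟩ := lt_iSup_iff.mp hc
  have hpos : (0:ℝ) < 1/(n+1) := by positivity
  filter_upwards [Metric.ball_mem_nhds y hpos] with y' hy'
  calc c < μ (ball y (r - 1/(n+1))) := hn
    _ ≤ μ (ball y' r) := by
        apply measure_mono
        intro z hz
        rw [mem_ball] at hz ⊢
        have h1 := dist_triangle z y y'
        rw [mem_ball] at hy'
        have h2 : dist y y' = dist y' y := dist_comm y y'
        linarith

lemma pointwise_bound {X : Type*} [MetricSpace X] [MeasurableSpace X] [BorelSpace X]
    (μ : Measure X)
    (hμ : ∀ (x : X) (r : ℝ), 0 < r → 0 < μ (ball x r) ∧ μ (ball x r) < ∞)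
    (u : X → ℝ) (K : ℝ≥0) (hu : LipschitzWith K u) (r : ℝ) (hr : 0 < r) (x : X)
    (hint : IntegrableOn (fun y => ((μ (ball y r)).toReal)⁻¹) (ball x r) μ) :
    |amvOp μ u x r - samvOp μ u x r| ≤ ((K : ℝ) / 2) * (zr μ x r / r) := by
  have hfin : μ (ball x r) ≠ ∞ := (hμ x r hr).2.ne
  have hpos : μ (ball x r) ≠ 0 := (hμ x r hr).1.ne'
  set B := ball x r with hB
  set c : ℝ := (μ B).toReal with hc
  have hc_pos : 0 < c := ENNReal.toReal_pos hpos hfin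
  set ρ : X → ℝ := fun y => c / (μ (ball y r)).toReal with hρ
  set g : X → ℝ := fun y => u y - u x with hg
  have hg_meas : Measurable g := (hu.continuous.measurable).sub measurable_const
  have hρ_meas : Measurable ρ :=
    measurable_const.div ((measurable_measureBall μ r).ennreal_toReal)
  have hρ_nonneg : ∀ y, 0 ≤ ρ y := fun y => div_nonneg hc_pos.le ENNReal.toReal_nonneg
  have hg_bdd : ∀ y ∈ B, |g y| ≤ (K : ℝ) * r := by
    intro y hy
    have h1 : dist (u y) (u x) ≤ (K : ℝ) * dist y x := hu.dist_le_mul y x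
    rw [Real.dist_eq] at h1
    have h2 : dist y x < r := mem_ball.mp hy
    calc |g y| ≤ (K : ℝ) * dist y x := h1
      _ ≤ (K : ℝ) * r := by
          exact mul_le_mul_of_nonneg_left h2.le K.coe_nonneg
  have hg_int : IntegrableOn g B μ := by
    apply Measure.integrableOn_of_bounded hfin hg_meas.aestronglyMeasurable
    filter_upwards [ae_restrict_mem measurableSet_ball] with y hy
    exact (Real.norm_eq_abs _) ▸ hg_bdd y hy
  have hρ_int : IntegrableOn ρ B μ := by
    simp only [hρ, div_eq_mul_inv]
    exact hint.const_mul c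
  have hgρ_int : IntegrableOn (fun y => g y * ρ y) B μ := by
    apply Integrable.mono (hρ_int.const_mul ((K : ℝ) * r)) (hg_meas.mul hρ_meas).aestronglyMeasurable
    filter_upwards [ae_restrict_mem measurableSet_ball] with y hy
    calc ‖g y * ρ y‖ = |g y| * |ρ y| := by rw [Real.norm_eq_abs, abs_mul]
      _ ≤ ((K:ℝ) * r) * |ρ y| := mul_le_mul_of_nonneg_right (hg_bdd y hy) (abs_nonneg _)
      _ ≤ ‖((K:ℝ) * r) * ρ y‖ := by
          rw [Real.norm_eq_abs, abs_mul, abs_of_nonneg (mul_nonneg K.coe_nonneg hr.le)]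
  have hconst_int : IntegrableOn (fun _ : X => (1:ℝ)) B μ :=
    integrableOn_const hfin
  have h1ρ_int : IntegrableOn (fun y => 1 - ρ y) B μ := hconst_int.sub hρ_int
  have habs_int : IntegrableOn (fun y => |1 - ρ y|) B μ := h1ρ_int.abs
  have hg1ρ_int : IntegrableOn (fun y => g y * (1 - ρ y)) B μ := by
    have : (fun y => g y * (1 - ρ y)) = fun y => g y - g y * ρ y := by
      funext y; ring
    rw [this]; exact hg_int.sub hgρ_int
  -- key identity
  have hkey : amvOp μ u x r - samvOp μ u x r
      = (1 / (2 * r ^ 2)) * (c⁻¹ * ∫ y in B, g y * (1 - ρ y) ∂μ) := by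
    have h1 : amvOp μ u x r = (1 / r ^ 2) * (c⁻¹ * ∫ y in B, g y ∂μ) := by
      rw [amvOp, setAverage_eq, smul_eq_mul]; rfl
    have h2 : samvOp μ u x r = (1 / (2 * r ^ 2)) * (c⁻¹ * ∫ y in B, g y * (1 + ρ y) ∂μ) := by
      rw [samvOp, setAverage_eq, smul_eq_mul]; rfl
    have e1 : ∫ y in B, g y * (1 + ρ y) ∂μ = (∫ y in B, g y ∂μ) + ∫ y in B, g y * ρ y ∂μ := by
      rw [← integral_add hg_int hgρ_int]
      congr 1; funext y; ring
    have e2 : ∫ y in B, g y * (1 - ρ y) ∂μ = (∫ y in B, g y ∂μ) - ∫ y in B, g y * ρ y ∂μ := by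
      rw [← integral_sub hg_int hgρ_int]
      congr 1; funext y; ring
    rw [h1, h2, e1, e2]
    ring
  rw [hkey]
  have hzr : zr μ x r = c⁻¹ * ∫ y in B, |1 - ρ y| ∂μ := by
    rw [zr, setAverage_eq, smul_eq_mul]; rfl
  have hbound : |∫ y in B, g y * (1 - ρ y) ∂μ| ≤ ((K:ℝ) * r) * ∫ y in B, |1 - ρ y| ∂μ := by
    calc |∫ y in B, g y * (1 - ρ y) ∂μ| ≤ ∫ y in B, |g y * (1 - ρ y)| ∂μ := by
          exact (Real.norm_eq_abs _) ▸ norm_integral_le_integral_norm _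
      _ ≤ ∫ y in B, ((K:ℝ) * r) * |1 - ρ y| ∂μ := by
          apply setIntegral_mono_on hg1ρ_int.abs (habs_int.const_mul _) measurableSet_ball
          intro y hy
          rw [abs_mul]
          exact mul_le_mul_of_nonneg_right (hg_bdd y hy) (abs_nonneg _)
      _ = ((K:ℝ) * r) * ∫ y in B, |1 - ρ y| ∂μ := integral_const_mul _ _
  have hintabs_nonneg : 0 ≤ ∫ y in B, |1 - ρ y| ∂μ := integral_nonneg fun y => abs_nonneg _
  rw [abs_mul, abs_mul, abs_of_nonneg (by positivity : (0:ℝ) ≤ 1 / (2 * r ^ 2)),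
    abs_of_nonneg (inv_nonneg.mpr hc_pos.le), hzr]
  calc 1 / (2 * r ^ 2) * (c⁻¹ * |∫ y in B, g y * (1 - ρ y) ∂μ|)
      ≤ 1 / (2 * r ^ 2) * (c⁻¹ * (((K:ℝ) * r) * ∫ y in B, |1 - ρ y| ∂μ)) := by
        apply mul_le_mul_of_nonneg_left _ (by positivity)
        exact mul_le_mul_of_nonneg_left hbound (inv_nonneg.mpr hc_pos.le)
    _ = (K : ℝ) / 2 * (c⁻¹ * (∫ y in B, |1 - ρ y| ∂μ) / r) := by
        field_simp

/-- On a locally compact metric measure space, for every Lipschitz `u`, every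
compactly supported continuous `φ` and every `r > 0`:
`|∫ φ (Δ_{μ,r}u − Δ̃_{μ,r}u) dμ| ≤ (Lip(u)/2) ∫ |φ| z_r/r dμ`, the right-hand side possibly
being `+∞`. -/
theorem stmt_8 {X : Type*} [MetricSpace X] [MeasurableSpace X] [BorelSpace X]
    [LocallyCompactSpace X]
    (μ : Measure X)
    (hμ : ∀ (x : X) (r : ℝ), 0 < r → 0 < μ (ball x r) ∧ μ (ball x r) < ∞)
    (u : X → ℝ) (K : ℝ≥0) (hu : LipschitzWith K u)
    (φ : X → ℝ) (hφc : Continuous φ) (hφs : HasCompactSupport φ)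
    (r : ℝ) (hr : 0 < r) :
    ENNReal.ofReal |∫ x, φ x * (amvOp μ u x r - samvOp μ u x r) ∂μ| ≤
      ENNReal.ofReal ((K : ℝ) / 2) * ∫⁻ x, ENNReal.ofReal (|φ x| * (zr μ x r / r)) ∂μ := by
  classical
  set G : X → ℝ≥0∞ := fun y => (μ (ball y r))⁻¹ with hGdef
  have hG_meas : Measurable G := (measurable_measureBall μ r).inv
  set A := tsupport φ with hAdef
  have hA_meas : MeasurableSet A := (isClosed_tsupport φ).measurableSet
  by_cases hAe : A = ∅
  · have hφ0 : ∀ x, φ x = 0 := by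
      intro x
      apply image_eq_zero_of_notMem_tsupport
      rw [← hAdef, hAe]
      exact notMem_empty x
    simp only [hφ0, zero_mul, integral_zero, abs_zero, ENNReal.ofReal_zero]
    exact zero_le
  -- main case
  obtain ⟨x₀, hx₀⟩ := nonempty_iff_ne_empty.mpr hAe
  have hA_cpt : IsCompact A := hφs
  obtain ⟨R, hR⟩ := hA_cpt.isBounded.subset_closedBall x₀
  have hR0 : 0 ≤ R := by
    have := hR hx₀
    rw [mem_closedBall, dist_self] at this
    exact this
  set A' := Metric.thickening r A with hA'def
  have hA'_meas : MeasurableSet A' := isOpen_thickening.measurableSet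
  have hAsubA' : A ⊆ A' := self_subset_thickening hr A
  have hA'_fin : μ A' < ∞ := by
    refine lt_of_le_of_lt (measure_mono ?_) (hμ x₀ (R + r + 1) (by linarith)).2
    intro y hy
    obtain ⟨a, ha, hya⟩ := mem_thickening_iff.mp hy
    have h1 : dist a x₀ ≤ R := mem_closedBall.mp (hR ha)
    have := dist_triangle y a x₀
    rw [mem_ball]
    linarith
  have hA_fin : μ A < ∞ := lt_of_le_of_lt (measure_mono hAsubA') hA'_fin
  haveI : IsFiniteMeasure (μ.restrict A') :=
    ⟨by rwa [Measure.restrict_apply_univ]⟩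
  haveI : IsFiniteMeasure (μ.restrict A) :=
    ⟨by rwa [Measure.restrict_apply_univ]⟩
  obtain ⟨Q, hQc, hQd⟩ := hA_cpt.isSeparable
  set S : Set (X × X) :=
    ⋃ q ∈ Q, ⋃ s : ℚ, ⋃ (_ : 0 < (s : ℝ) ∧ (s : ℝ) < r),
      ball q (s : ℝ) ×ˢ ball q (r - (s : ℝ)) with hSdef
  have hS_meas : MeasurableSet S := by
    refine MeasurableSet.biUnion hQc fun q _ => ?_
    refine MeasurableSet.iUnion fun s => MeasurableSet.iUnion fun _ => ?_
    exact measurableSet_ball.prod measurableSet_ball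
  have hS_sub : ∀ p ∈ S, dist p.1 p.2 < r := by
    rintro ⟨x, y⟩ hp
    simp only [hSdef, mem_iUnion, mem_prod, mem_ball] at hp
    obtain ⟨q, _, s, ⟨hs0, hsr⟩, hxq, hyq⟩ := hp
    have := dist_triangle x q y
    have h2 : dist q y = dist y q := dist_comm q y
    simp only
    linarith
  have hS_eq : ∀ x ∈ A, ∀ y : X, ((x, y) ∈ S ↔ y ∈ ball x r) := by
    intro x hx y
    constructor
    · intro h
      rw [mem_ball, dist_comm]
      exact hS_sub (x, y) h
    · intro hy
      rw [mem_ball] at hy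
      have hd : dist x y < r := by rw [dist_comm]; exact hy
      have hε : 0 < (r - dist x y) / 2 := by linarith
      obtain ⟨s, hs0, hsε⟩ := exists_rat_btwn hε
      have hs0' : (0 : ℝ) < s := by exact_mod_cast hs0
      have hxQ : x ∈ closure Q := hQd hx
      obtain ⟨q, hqQ, hxq⟩ := Metric.mem_closure_iff.mp hxQ (s : ℝ) hs0'
      have hdr : 0 ≤ dist x y := dist_nonneg
      simp only [hSdef, mem_iUnion, mem_prod, mem_ball]
      refine ⟨q, hqQ, s, ⟨hs0', by linarith⟩, hxq, ?_⟩
      have h3 : dist y q ≤ dist y x + dist x q := dist_triangle y x q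
      have h4 : dist y x = dist x y := dist_comm y x
      linarith
  set f : X → X → ℝ≥0∞ := fun x y => S.indicator (fun p => G p.2) (x, y) with hfdef
  have hf_meas : Measurable (Function.uncurry f) := by
    have : Function.uncurry f = S.indicator (fun p => G p.2) := rfl
    rw [this]
    exact (hG_meas.comp measurable_snd).indicator hS_meas
  set F : X → ℝ≥0∞ := fun x => ∫⁻ y, f x y ∂(μ.restrict A') with hFdef
  have hF_meas : Measurable F := hf_meas.lintegral_prod_right
  have hF_eq : ∀ x ∈ A, F x = ∫⁻ y in ball x r, G y ∂μ := by
    intro x hx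
    have hball : ball x r ⊆ A' := by
      intro y hy
      exact mem_thickening_iff.mpr ⟨x, hx, mem_ball.mp hy⟩
    have h1 : ∀ y, f x y = (ball x r).indicator G y := by
      intro y
      by_cases hy : y ∈ ball x r
      · rw [indicator_of_mem hy]
        have : (x, y) ∈ S := (hS_eq x hx y).mpr hy
        simp only [hfdef]
        rw [indicator_of_mem this]
      · rw [indicator_of_notMem hy]
        simp only [hfdef]
        rw [indicator_of_notMem (fun h => hy ((hS_eq x hx y).mp h))]
    simp only [hFdef]
    simp_rw [h1]
    rw [lintegral_indicator measurableSet_ball,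
      Measure.restrict_restrict measurableSet_ball, inter_eq_left.mpr hball]
  have hswap := lintegral_lintegral_swap (μ := μ.restrict A) (ν := μ.restrict A')
    hf_meas.aemeasurable
  have hinner : ∀ y, ∫⁻ x, f x y ∂(μ.restrict A) ≤ 1 := by
    intro y
    have h2 : ∀ x, f x y ≤ (ball y r).indicator (fun _ => G y) x := by
      intro x
      by_cases hxy : (x, y) ∈ S
      · have hm : x ∈ ball y r := by
          rw [mem_ball]
          exact hS_sub (x, y) hxy
        simp only [hfdef]
        rw [indicator_of_mem hxy, indicator_of_mem hm]
      · simp only [hfdef]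
        rw [indicator_of_notMem hxy]
        exact zero_le
    calc ∫⁻ x, f x y ∂(μ.restrict A)
        ≤ ∫⁻ x, (ball y r).indicator (fun _ => G y) x ∂(μ.restrict A) := lintegral_mono h2
      _ = G y * (μ.restrict A) (ball y r) := lintegral_indicator_const measurableSet_ball _
      _ ≤ G y * μ (ball y r) := by
          apply mul_le_mul_right
          rw [Measure.restrict_apply measurableSet_ball]
          exact measure_mono inter_subset_left
      _ = 1 := ENNReal.inv_mul_cancel (hμ y r hr).1.ne' (hμ y r hr).2.ne
  have htot : ∫⁻ x, F x ∂(μ.restrict A) < ∞ := by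
    calc ∫⁻ x, F x ∂(μ.restrict A)
        = ∫⁻ y, ∫⁻ x, f x y ∂(μ.restrict A) ∂(μ.restrict A') := hswap
      _ ≤ ∫⁻ _, 1 ∂(μ.restrict A') := lintegral_mono hinner
      _ = μ A' := by simp
      _ < ∞ := hA'_fin
  have hae : ∀ᵐ x ∂μ, x ∈ A → F x < ∞ := by
    rw [← ae_restrict_iff' hA_meas]
    exact ae_lt_top hF_meas htot.ne
  have hptwise : ∀ᵐ x ∂μ,
      ENNReal.ofReal |φ x * (amvOp μ u x r - samvOp μ u x r)| ≤
        ENNReal.ofReal ((K : ℝ) / 2) * ENNReal.ofReal (|φ x| * (zr μ x r / r)) := by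
    filter_upwards [hae] with x hx
    by_cases hφx : φ x = 0
    · simp [hφx]
    · have hxA : x ∈ A := subset_tsupport φ (Function.mem_support.mpr hφx)
      have hFx : ∫⁻ y in ball x r, G y ∂μ < ∞ := hF_eq x hxA ▸ hx hxA
      have hint : IntegrableOn (fun y => ((μ (ball y r)).toReal)⁻¹) (ball x r) μ := by
        constructor
        · exact ((measurable_measureBall μ r).ennreal_toReal.inv).aestronglyMeasurable
        · rw [hasFiniteIntegral_iff_ofReal (Eventually.of_forall fun y => by positivity)]
          refine lt_of_le_of_lt (lintegral_mono fun y => ?_) hFx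
          rw [← ENNReal.toReal_inv]
          exact ENNReal.ofReal_toReal_le
      have hbd := pointwise_bound μ hμ u K hu r hr x hint
      calc ENNReal.ofReal |φ x * (amvOp μ u x r - samvOp μ u x r)|
          = ENNReal.ofReal (|φ x| * |amvOp μ u x r - samvOp μ u x r|) := by rw [abs_mul]
        _ ≤ ENNReal.ofReal (|φ x| * (((K : ℝ) / 2) * (zr μ x r / r))) :=
            ENNReal.ofReal_le_ofReal (mul_le_mul_of_nonneg_left hbd (abs_nonneg _))
        _ = ENNReal.ofReal (((K : ℝ) / 2) * (|φ x| * (zr μ x r / r))) := by ring_nf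
        _ = ENNReal.ofReal ((K : ℝ) / 2) * ENNReal.ofReal (|φ x| * (zr μ x r / r)) :=
            ENNReal.ofReal_mul (by positivity)
  calc ENNReal.ofReal |∫ x, φ x * (amvOp μ u x r - samvOp μ u x r) ∂μ|
      = ‖∫ x, φ x * (amvOp μ u x r - samvOp μ u x r) ∂μ‖ₑ :=
        (Real.enorm_eq_ofReal_abs _).symm
    _ ≤ ∫⁻ x, ‖φ x * (amvOp μ u x r - samvOp μ u x r)‖ₑ ∂μ :=
        enorm_integral_le_lintegral_enorm _
    _ = ∫⁻ x, ENNReal.ofReal |φ x * (amvOp μ u x r - samvOp μ u x r)| ∂μ := by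
        simp_rw [Real.enorm_eq_ofReal_abs]
    _ ≤ ∫⁻ x, ENNReal.ofReal ((K : ℝ) / 2) * ENNReal.ofReal (|φ x| * (zr μ x r / r)) ∂μ :=
        lintegral_mono_ae hptwise
    _ = ENNReal.ofReal ((K : ℝ) / 2) * ∫⁻ x, ENNReal.ofReal (|φ x| * (zr μ x r / r)) ∂μ :=
        lintegral_const_mul' _ _ ENNReal.ofReal_ne_top
end

section
/- Let (X,d,μ) be a locally compact metric measure space such that z_r ∈ L¹_loc(X,μ) for all sufficiently small r > 0, and such that (z_r/r)·μ converges weakly to 0 as r ↓ 0, i.e. ∫_X φ · (z_r/r) dμ → 0 for every compactly supported continuous function φ. Then a Lipschitz function u : X → ℝ admits a weak AMV Laplacian if and only if it admits a weak SAMV Laplacian, and in that case the two weak Laplacians coincide. -/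
open MeasureTheory Filter Metric Set
open scoped ENNReal Topology NNReal

lemma aux_sigmaFinite {X : Type*} [MetricSpace X] [MeasurableSpace X]
    (μ : Measure X) (x₀ : X) (hfin : ∀ n : ℕ, μ (ball x₀ ((n : ℝ) + 1)) < ∞) :
    SigmaFinite μ := by
  refine ⟨⟨⟨fun n => ball x₀ ((n : ℝ) + 1), fun _ => trivial, fun n => hfin n, ?_⟩⟩⟩
  refine Set.eq_univ_iff_forall.2 fun x => ?_
  obtain ⟨n, hn⟩ := exists_nat_gt (dist x x₀)
  exact Set.mem_iUnion.2 ⟨n, by simp only [Metric.mem_ball]; linarith⟩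

lemma aux_separable {X : Type*} [MetricSpace X] [MeasurableSpace X] [BorelSpace X]
    (μ : Measure X) [SFinite μ]
    (hpos : ∀ (x : X) (r : ℝ), 0 < r → 0 < μ (ball x r)) :
    TopologicalSpace.SeparableSpace X := by
  rcases isEmpty_or_nonempty X with hX | ⟨⟨x₀⟩⟩
  · exact ⟨⟨∅, countable_empty, fun x => isEmptyElim x⟩⟩
  rw [← TopologicalSpace.isSeparable_univ_iff]
  have hball : ∀ R : ℝ, TopologicalSpace.IsSeparable (ball x₀ R) := by
    intro R
    have key : ∀ ε : ℝ, 0 < ε → ∃ s : Set X, s.Countable ∧ s ⊆ ball x₀ R ∧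
        ∀ b ∈ ball x₀ R, ∃ p ∈ s, dist b p < ε := by
      intro ε hε
      set S : Set (Set X) := {s : Set X | s ⊆ ball x₀ R ∧
          ∀ p ∈ s, ∀ q ∈ s, p ≠ q → ε ≤ dist p q} with hS
      have hzorn : ∀ c ⊆ S, IsChain (· ⊆ ·) c → ∃ ub ∈ S, ∀ s ∈ c, s ⊆ ub := by
        intro c hc hchain
        refine ⟨⋃₀ c, ⟨sUnion_subset fun s hs => (hc hs).1, ?_⟩,
          fun s hs => subset_sUnion_of_mem hs⟩
        rintro p ⟨s₁, hs₁, hp⟩ q ⟨s₂, hs₂, hq⟩ hpq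
        rcases hchain.total hs₁ hs₂ with h | h
        · exact (hc hs₂).2 p (h hp) q hq hpq
        · exact (hc hs₁).2 p hp q (h hq) hpq
      obtain ⟨m, hm⟩ := zorn_subset S hzorn
      have hmS : m ∈ S := hm.prop
      have hcnt : m.Countable := by
        have hdisj : Pairwise (Function.onFun Disjoint fun p : m => ball (p : X) (ε / 2)) := by
          intro p q hpq
          refine Metric.ball_disjoint_ball ?_
          have hne : (p : X) ≠ q := fun h => hpq (Subtype.ext h)
          have := hmS.2 p p.2 q q.2 hne
          linarith
        have hcnt' := MeasureTheory.Measure.countable_meas_pos_of_disjoint_iUnion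
          (μ := μ) (fun _ : m => measurableSet_ball) hdisj
        have huniv : {i : m | 0 < μ (ball (i : X) (ε / 2))} = Set.univ :=
          Set.eq_univ_iff_forall.2 fun i => hpos _ _ (by linarith)
        rw [huniv, Set.countable_univ_iff] at hcnt'
        exact Set.countable_coe_iff.mp hcnt'
      refine ⟨m, hcnt, hmS.1, ?_⟩
      intro b hb
      by_contra hcon
      push_neg at hcon
      have hbm : b ∉ m := fun hbm => by
        have := hcon b hbm
        simp at this
        linarith
      have hins : insert b m ∈ S := by
        constructor
        · exact insert_subset hb hmS.1
        · intro p hp q hq hpq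
          rcases mem_insert_iff.1 hp with hp1 | hp2 <;> rcases mem_insert_iff.1 hq with hq1 | hq2
          · exact absurd (hp1.trans hq1.symm) hpq
          · subst hp1; exact hcon q hq2
          · subst hq1; rw [dist_comm]; exact hcon p hp2
          · exact hmS.2 p hp2 q hq2 hpq
      exact hbm (hm.2 hins (subset_insert b m) (mem_insert b m))
    choose s hs_cnt hs_sub hs_net using fun k : ℕ => key (1 / ((k : ℝ) + 1)) (by positivity)
    refine ⟨⋃ k, s k, countable_iUnion hs_cnt, fun b hb => Metric.mem_closure_iff.2
      fun ε hε => ?_⟩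
    obtain ⟨k, hk⟩ := exists_nat_one_div_lt hε
    obtain ⟨p, hp, hpd⟩ := hs_net k b hb
    exact ⟨p, Set.mem_iUnion.2 ⟨k, hp⟩, hpd.trans hk⟩
  have huniv : (univ : Set X) = ⋃ n : ℕ, ball x₀ ((n : ℝ) + 1) := by
    refine (Set.eq_univ_iff_forall.2 fun x => ?_).symm
    obtain ⟨n, hn⟩ := exists_nat_gt (dist x x₀)
    exact Set.mem_iUnion.2 ⟨n, by simp only [Metric.mem_ball]; linarith⟩
  rw [huniv]
  exact TopologicalSpace.IsSeparable.iUnion fun n => hball _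

lemma aux_measurable_ballMeasure {X : Type*} [MetricSpace X] [MeasurableSpace X] [BorelSpace X]
    [SecondCountableTopology X] (μ : Measure X) [SigmaFinite μ] (r : ℝ) :
    Measurable fun y : X => μ (ball y r) := by
  have hS : MeasurableSet {p : X × X | p.2 ∈ ball p.1 r} := by
    have : IsOpen {p : X × X | dist p.2 p.1 < r} :=
      isOpen_lt (continuous_snd.dist continuous_fst) continuous_const
    exact this.measurableSet
  have hfin : Measurable fun p : X × X =>
      {q : X × X | q.2 ∈ ball q.1 r}.indicator (fun _ => (1 : ℝ≥0∞)) p :=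
    measurable_const.indicator hS
  have heq : (fun x : X => μ (ball x r)) = fun x : X =>
      ∫⁻ y, {q : X × X | q.2 ∈ ball q.1 r}.indicator (fun _ => (1 : ℝ≥0∞)) (x, y) ∂μ := by
    funext x
    have : ∀ y : X, {q : X × X | q.2 ∈ ball q.1 r}.indicator (fun _ => (1 : ℝ≥0∞)) (x, y)
        = (ball x r).indicator (fun _ => (1 : ℝ≥0∞)) y := fun y => rfl
    simp_rw [this]
    exact (lintegral_indicator_one measurableSet_ball).symm
  rw [heq]
  exact hfin.lintegral_prod_right'

lemma aux_null {X : Type*} [MetricSpace X] [MeasurableSpace X] [BorelSpace X]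
    [SecondCountableTopology X] (μ : Measure X) [SigmaFinite μ] (x₀ : X)
    (hμ : ∀ (x : X) (r : ℝ), 0 < r → 0 < μ (ball x r) ∧ μ (ball x r) < ∞)
    (r : ℝ) (hr0 : 0 < r) :
    ∀ᵐ x ∂μ, IntegrableOn (fun y => ((μ (ball y r)).toReal)⁻¹) (ball x r) μ := by
  have hM := aux_measurable_ballMeasure μ r
  have hm : Measurable fun y : X => ((μ (ball y r)).toReal)⁻¹ := hM.ennreal_toReal.inv
  have hS : MeasurableSet {p : X × X | p.2 ∈ ball p.1 r} := by
    have : IsOpen {p : X × X | dist p.2 p.1 < r} :=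
      isOpen_lt (continuous_snd.dist continuous_fst) continuous_const
    exact this.measurableSet
  set fin : X × X → ℝ≥0∞ :=
    fun p => {q : X × X | q.2 ∈ ball q.1 r}.indicator (fun q => (μ (ball q.2 r))⁻¹) p with hfin_def
  have hfin_meas : Measurable fin := ((hM.comp measurable_snd).inv).indicator hS
  set G : X → ℝ≥0∞ := fun x => ∫⁻ y in ball x r, (μ (ball y r))⁻¹ ∂μ with hG_def
  have hG_eq : ∀ x, G x = ∫⁻ y, fin (x, y) ∂μ := by
    intro x
    rw [hG_def]
    simp only
    rw [← lintegral_indicator measurableSet_ball]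
    exact lintegral_congr fun y => rfl
  have hGmeas : Measurable G := by
    have : G = fun x => ∫⁻ y, fin (x, y) ∂μ := funext hG_eq
    rw [this]
    exact hfin_meas.lintegral_prod_right'
  -- each piece is null
  have hfinite : ∀ n : ℕ, μ ({x | G x = ∞} ∩ ball x₀ ((n : ℝ) + 1)) = 0 := by
    intro n
    set B := ball x₀ ((n : ℝ) + 1) with hB_def
    have hbound : ∫⁻ x in B, G x ∂μ ≤ μ (ball x₀ ((n : ℝ) + 1 + r)) := by
      have h1 : ∫⁻ x in B, G x ∂μ = ∫⁻ x, ∫⁻ y, fin (x, y) ∂μ ∂(μ.restrict B) := by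
        rw [← lintegral_indicator measurableSet_ball]
        · simp only [hB_def]
          rw [lintegral_indicator measurableSet_ball]
          exact lintegral_congr fun x => hG_eq x
      rw [h1, lintegral_lintegral_swap hfin_meas.aemeasurable]
      have h2 : ∀ y : X, ∫⁻ x, fin (x, y) ∂(μ.restrict B)
          ≤ (ball x₀ ((n : ℝ) + 1 + r)).indicator (fun _ => (1 : ℝ≥0∞)) y := by
        intro y
        have hrew : ∀ x, fin (x, y) = (ball y r).indicator (fun _ => (μ (ball y r))⁻¹) x := by
          intro x
          by_cases hxy : x ∈ ball y r
          · rw [Set.indicator_of_mem hxy]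
            have : (x, y) ∈ {q : X × X | q.2 ∈ ball q.1 r} := by
              simpa [Metric.mem_ball, dist_comm] using hxy
            simp only [hfin_def]
            rw [Set.indicator_of_mem this]
          · rw [Set.indicator_of_notMem hxy]
            have : (x, y) ∉ {q : X × X | q.2 ∈ ball q.1 r} := by
              simpa [Metric.mem_ball, dist_comm] using hxy
            simp only [hfin_def]
            rw [Set.indicator_of_notMem this]
        simp_rw [hrew]
        rw [lintegral_indicator_const measurableSet_ball,
          Measure.restrict_apply measurableSet_ball]
        by_cases hy : y ∈ ball x₀ ((n : ℝ) + 1 + r)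
        · rw [Set.indicator_of_mem hy]
          calc (μ (ball y r))⁻¹ * μ (ball y r ∩ B)
              ≤ (μ (ball y r))⁻¹ * μ (ball y r) := by
                gcongr
                exact inter_subset_left
            _ = 1 := ENNReal.inv_mul_cancel (hμ y r hr0).1.ne' (hμ y r hr0).2.ne
        · rw [Set.indicator_of_notMem hy]
          have hempty : ball y r ∩ B = ∅ := by
            rw [Set.eq_empty_iff_forall_notMem]
            rintro x ⟨hx1, hx2⟩
            apply hy
            rw [Metric.mem_ball] at *
            have := dist_triangle y x x₀
            rw [dist_comm y x] at this
            linarith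
          rw [hempty]
          simp
      calc ∫⁻ y, ∫⁻ x, fin (x, y) ∂(μ.restrict B) ∂μ
          ≤ ∫⁻ y, (ball x₀ ((n : ℝ) + 1 + r)).indicator (fun _ => (1 : ℝ≥0∞)) y ∂μ :=
            lintegral_mono h2
        _ = μ (ball x₀ ((n : ℝ) + 1 + r)) := lintegral_indicator_one measurableSet_ball
    have hlt : ∫⁻ x in B, G x ∂μ ≠ ∞ :=
      (lt_of_le_of_lt hbound (hμ x₀ _ (by positivity)).2).ne
    have hae : ∀ᵐ x ∂μ.restrict B, G x < ∞ := ae_lt_top hGmeas hlt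
    have h0 : μ.restrict B {x | G x = ∞} = 0 := by
      have := ae_iff.mp hae
      convert this using 2
      ext x
      simp [lt_top_iff_ne_top]
    have hGset : MeasurableSet {x : X | G x = ∞} := hGmeas (measurableSet_singleton ∞)
    rwa [Measure.restrict_apply hGset] at h0
  have hGnull : μ {x | G x = ∞} = 0 := by
    have hsub : {x | G x = ∞} ⊆ ⋃ n : ℕ, ({x | G x = ∞} ∩ ball x₀ ((n : ℝ) + 1)) := by
      intro x hx
      obtain ⟨n, hn⟩ := exists_nat_gt (dist x x₀)
      exact Set.mem_iUnion.2 ⟨n, hx, by rw [Metric.mem_ball]; linarith⟩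
    exact measure_mono_null hsub (measure_iUnion_null hfinite)
  have hae : ∀ᵐ x ∂μ, G x ≠ ∞ := by
    rw [ae_iff]
    simpa using hGnull
  refine hae.mono fun x hx => ?_
  refine ⟨hm.aestronglyMeasurable, ?_⟩
  rw [hasFiniteIntegral_iff_norm]
  have : ∀ y : X, ENNReal.ofReal ‖((μ (ball y r)).toReal)⁻¹‖ = (μ (ball y r))⁻¹ := by
    intro y
    rw [Real.norm_eq_abs, abs_of_nonneg (by positivity),
      ENNReal.ofReal_inv_of_pos (ENNReal.toReal_pos (hμ y r hr0).1.ne' (hμ y r hr0).2.ne),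
      ENNReal.ofReal_toReal (hμ y r hr0).2.ne]
  simp_rw [this]
  exact lt_top_iff_ne_top.2 hx

section Core

variable {X : Type*} [MetricSpace X] [MeasurableSpace X] [BorelSpace X]
  [SecondCountableTopology X]

lemma aux_core (μ : Measure X) [SigmaFinite μ] (x₀ : X)
    (hμ : ∀ (x : X) (r : ℝ), 0 < r → 0 < μ (ball x r) ∧ μ (ball x r) < ∞)
    (u : X → ℝ) (K : ℝ≥0) (hu : LipschitzWith K u)
    (φ : X → ℝ) (hφ : Continuous φ)
    (r : ℝ) (hr0 : 0 < r)
    (hψint : Integrable (fun x => ((K : ℝ) / 2 * |φ x|) * (zr μ x r / r)) μ) :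
    ‖(∫ x, φ x * samvOp μ u x r ∂μ) - ∫ x, φ x * amvOp μ u x r ∂μ‖
      ≤ ∫ x, ((K : ℝ) / 2 * |φ x|) * (zr μ x r / r) ∂μ := by
  have hM := aux_measurable_ballMeasure μ r
  have hm : Measurable fun y : X => (μ (ball y r)).toReal := hM.ennreal_toReal
  have hmpos : ∀ y : X, 0 < (μ (ball y r)).toReal := fun y =>
    ENNReal.toReal_pos (hμ y r hr0).1.ne' (hμ y r hr0).2.ne
  have hu_meas : Measurable u := hu.continuous.measurable
  have hS : MeasurableSet {p : X × X | p.2 ∈ ball p.1 r} := by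
    have : IsOpen {p : X × X | dist p.2 p.1 < r} :=
      isOpen_lt (continuous_snd.dist continuous_fst) continuous_const
    exact this.measurableSet
  set F : X × X → ℝ := fun p => {q : X × X | q.2 ∈ ball q.1 r}.indicator
      (fun q => (u q.2 - u q.1) * (1 - (μ (ball q.1 r)).toReal / (μ (ball q.2 r)).toReal)) p
    with hF_def
  have hF_meas : Measurable F := (((hu_meas.comp measurable_snd).sub
      (hu_meas.comp measurable_fst)).mul (measurable_const.sub
      ((hm.comp measurable_fst).div (hm.comp measurable_snd)))).indicator hS
  set err : X → ℝ := fun x => (1 / (2 * r ^ 2)) * ((μ (ball x r)).toReal)⁻¹ * ∫ y, F (x, y) ∂μ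
    with herr_def
  have herr_meas : Measurable err := by
    have hint_meas : Measurable fun x : X => ∫ y, F (x, y) ∂μ :=
      (hF_meas.stronglyMeasurable.integral_prod_right').measurable
    exact (measurable_const.mul hm.inv).mul hint_meas
  have hFint_eq : ∀ x : X, (∫ y, F (x, y) ∂μ)
      = ∫ y in ball x r, (u y - u x) * (1 - (μ (ball x r)).toReal / (μ (ball y r)).toReal) ∂μ := by
    intro x
    have hpt : ∀ y : X, F (x, y) = (ball x r).indicator
        (fun y => (u y - u x) * (1 - (μ (ball x r)).toReal / (μ (ball y r)).toReal)) y :=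
      fun y => rfl
    simp_rw [hpt]
    exact integral_indicator measurableSet_ball
  have hkey : ∀ x : X, IntegrableOn (fun y => ((μ (ball y r)).toReal)⁻¹) (ball x r) μ →
      samvOp μ u x r - amvOp μ u x r = -err x ∧
      |err x| ≤ (K : ℝ) / 2 * (zr μ x r / r) := by
    intro x hx
    have hcpos : 0 < (μ (ball x r)).toReal := hmpos x
    haveI : IsFiniteMeasure (μ.restrict (ball x r)) :=
      ⟨by rw [Measure.restrict_apply_univ]; exact (hμ x r hr0).2⟩
    have hub : ∀ y ∈ ball x r, |u y - u x| ≤ (K : ℝ) * r := by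
      intro y hy
      have h1 := hu.dist_le_mul y x
      rw [Real.dist_eq] at h1
      have h2 : (K : ℝ) * dist y x ≤ (K : ℝ) * r :=
        mul_le_mul_of_nonneg_left (le_of_lt (mem_ball.mp hy)) K.coe_nonneg
      linarith
    have hInt1 : IntegrableOn (fun y => u y - u x) (ball x r) μ := by
      refine Integrable.mono' (integrable_const ((K : ℝ) * r))
        ((hu_meas.sub measurable_const).aestronglyMeasurable) ?_
      refine (ae_restrict_iff' measurableSet_ball).2 (Eventually.of_forall fun y hy => ?_)
      simpa [Real.norm_eq_abs] using hub y hy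
    have hbase : IntegrableOn
        (fun y => 1 + (μ (ball x r)).toReal * ((μ (ball y r)).toReal)⁻¹) (ball x r) μ :=
      (integrable_const 1).add (hx.const_mul (μ (ball x r)).toReal)
    have habs : ∀ y : X, |1 - (μ (ball x r)).toReal / (μ (ball y r)).toReal|
        ≤ 1 + (μ (ball x r)).toReal * ((μ (ball y r)).toReal)⁻¹ := by
      intro y
      have h1 : |1 - (μ (ball x r)).toReal / (μ (ball y r)).toReal|
          ≤ |1| + |(μ (ball x r)).toReal / (μ (ball y r)).toReal| := abs_sub _ _
      rw [abs_one, abs_of_nonneg (div_nonneg hcpos.le (hmpos y).le), div_eq_mul_inv] at h1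
      exact h1
    have hδ_meas : Measurable fun y : X =>
        1 - (μ (ball x r)).toReal / (μ (ball y r)).toReal :=
      measurable_const.sub (measurable_const.div hm)
    have hIntδabs : IntegrableOn
        (fun y => |1 - (μ (ball x r)).toReal / (μ (ball y r)).toReal|) (ball x r) μ := by
      refine Integrable.mono' hbase hδ_meas.abs.aestronglyMeasurable ?_
      exact Eventually.of_forall fun y => by
        simpa [Real.norm_eq_abs, abs_abs] using habs y
    have hInt2 : IntegrableOn (fun y => (u y - u x) *
        (1 - (μ (ball x r)).toReal / (μ (ball y r)).toReal)) (ball x r) μ := by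
      refine Integrable.mono' (hbase.const_mul ((K : ℝ) * r))
        (((hu_meas.sub measurable_const).mul hδ_meas).aestronglyMeasurable) ?_
      refine (ae_restrict_iff' measurableSet_ball).2 (Eventually.of_forall fun y hy => ?_)
      rw [Real.norm_eq_abs, abs_mul]
      calc |u y - u x| * |1 - (μ (ball x r)).toReal / (μ (ball y r)).toReal|
          ≤ ((K : ℝ) * r) * (1 + (μ (ball x r)).toReal * ((μ (ball y r)).toReal)⁻¹) :=
            mul_le_mul (hub y hy) (habs y) (abs_nonneg _) (by positivity)
        _ = ((K : ℝ) * r) * (1 + (μ (ball x r)).toReal * ((μ (ball y r)).toReal)⁻¹) := rfl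
    have hsplit : ∫ y in ball x r,
          (u y - u x) * (1 + (μ (ball x r)).toReal / (μ (ball y r)).toReal) ∂μ
        = 2 * (∫ y in ball x r, (u y - u x) ∂μ)
          - ∫ y in ball x r,
              (u y - u x) * (1 - (μ (ball x r)).toReal / (μ (ball y r)).toReal) ∂μ := by
      have hfe : (fun y => (u y - u x) * (1 + (μ (ball x r)).toReal / (μ (ball y r)).toReal))
          = fun y => 2 * (u y - u x)
            - (u y - u x) * (1 - (μ (ball x r)).toReal / (μ (ball y r)).toReal) := by
        funext y; ring
      rw [hfe, integral_sub (hInt1.const_mul 2) hInt2, integral_const_mul]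
    have hBle : |∫ y in ball x r,
          (u y - u x) * (1 - (μ (ball x r)).toReal / (μ (ball y r)).toReal) ∂μ|
        ≤ (K : ℝ) * r * ∫ y in ball x r,
            |1 - (μ (ball x r)).toReal / (μ (ball y r)).toReal| ∂μ := by
      have hb : ∀ᵐ y ∂μ.restrict (ball x r),
          ‖(u y - u x) * (1 - (μ (ball x r)).toReal / (μ (ball y r)).toReal)‖
          ≤ (K : ℝ) * r * |1 - (μ (ball x r)).toReal / (μ (ball y r)).toReal| := by
        refine (ae_restrict_iff' measurableSet_ball).2 (Eventually.of_forall fun y hy => ?_)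
        rw [Real.norm_eq_abs, abs_mul]
        exact mul_le_mul_of_nonneg_right (hub y hy) (abs_nonneg _)
      have h := norm_integral_le_of_norm_le (hIntδabs.const_mul ((K : ℝ) * r)) hb
      rwa [Real.norm_eq_abs, integral_const_mul] at h
    constructor
    · simp only [samvOp, amvOp, herr_def]
      rw [setAverage_eq, setAverage_eq, smul_eq_mul, smul_eq_mul, hsplit, hFint_eq]
      have hr2 : (r : ℝ) ^ 2 ≠ 0 := pow_ne_zero 2 hr0.ne'
      simp only [measureReal_def]
      ring
    · simp only [herr_def]
      rw [hFint_eq, zr, setAverage_eq, smul_eq_mul, abs_mul, abs_mul,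
        abs_of_nonneg (show (0:ℝ) ≤ 1 / (2 * r ^ 2) by positivity),
        abs_of_nonneg (show (0:ℝ) ≤ ((μ (ball x r)).toReal)⁻¹ by positivity)]
      have hZnonneg : 0 ≤ ∫ y in ball x r,
          |1 - (μ (ball x r)).toReal / (μ (ball y r)).toReal| ∂μ :=
        integral_nonneg fun y => abs_nonneg _
      calc (1 / (2 * r ^ 2)) * ((μ (ball x r)).toReal)⁻¹ * |∫ y in ball x r,
            (u y - u x) * (1 - (μ (ball x r)).toReal / (μ (ball y r)).toReal) ∂μ|
          ≤ (1 / (2 * r ^ 2)) * ((μ (ball x r)).toReal)⁻¹ * ((K : ℝ) * r * ∫ y in ball x r,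
            |1 - (μ (ball x r)).toReal / (μ (ball y r)).toReal| ∂μ) := by
            refine mul_le_mul_of_nonneg_left hBle (by positivity)
        _ = (K : ℝ) / 2 * ((((μ (ball x r)).toReal)⁻¹ * ∫ y in ball x r,
            |1 - (μ (ball x r)).toReal / (μ (ball y r)).toReal| ∂μ) / r) := by
            field_simp
  -- now the global estimate
  have hnull := aux_null μ x₀ hμ r hr0
  set s : X → ℝ := fun x => φ x * samvOp μ u x r with hs_def
  set a : X → ℝ := fun x => φ x * amvOp μ u x r with ha_def
  set ψ : X → ℝ := fun x => ((K : ℝ) / 2 * |φ x|) * (zr μ x r / r) with hψ_def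
  have hzr_nonneg : ∀ x : X, 0 ≤ zr μ x r := by
    intro x
    rw [zr, setAverage_eq, smul_eq_mul]
    exact mul_nonneg (by positivity) (integral_nonneg fun y => abs_nonneg _)
  have hψ_nonneg : ∀ x : X, 0 ≤ ψ x := fun x =>
    mul_nonneg (by positivity) (div_nonneg (hzr_nonneg x) hr0.le)
  have hDae : ∀ᵐ x ∂μ, s x - a x = -(φ x * err x) ∧ |s x - a x| ≤ ψ x := by
    refine hnull.mono fun x hx => ?_
    obtain ⟨hid, hbd⟩ := hkey x hx
    have h1 : s x - a x = φ x * (samvOp μ u x r - amvOp μ u x r) := by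
      simp only [hs_def, ha_def]; ring
    constructor
    · rw [h1, hid]; ring
    · rw [h1, abs_mul, hid, abs_neg]
      calc |φ x| * |err x| ≤ |φ x| * ((K : ℝ) / 2 * (zr μ x r / r)) :=
          mul_le_mul_of_nonneg_left hbd (abs_nonneg _)
        _ = ψ x := by simp only [hψ_def]; ring
  have hD_aesm : AEStronglyMeasurable (fun x => s x - a x) μ := by
    refine AEStronglyMeasurable.congr
      ((hφ.measurable.mul herr_meas).neg).aestronglyMeasurable ?_
    exact (hDae.mono fun x hx => hx.1.symm)
  have hD_int : Integrable (fun x => s x - a x) μ := by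
    refine Integrable.mono' hψint hD_aesm ?_
    exact hDae.mono fun x hx => by simpa [Real.norm_eq_abs] using hx.2
  by_cases ha : Integrable a μ
  · have hs : Integrable s μ := by
      have h2 := ha.add hD_int
      exact h2.congr (Eventually.of_forall fun x => by simp only [Pi.add_apply, hs_def, ha_def]; ring)
    rw [← integral_sub hs ha]
    exact norm_integral_le_of_norm_le hψint
      (hDae.mono fun x hx => by simpa [Real.norm_eq_abs] using hx.2)
  · have hs : ¬ Integrable s μ := by
      intro hs
      exact ha ((hs.sub hD_int).congr (Eventually.of_forall fun x => by simp only [Pi.sub_apply, hs_def, ha_def]; ring))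
    rw [integral_undef ha, integral_undef hs]
    simpa using integral_nonneg hψ_nonneg


end Core

/-- On a locally compact metric measure space with `z_r ∈ L¹_loc` for all
small `r` and `(z_r/r) μ ⇀ 0` as `r ↓ 0`, a Lipschitz function `u` admits a weak AMV Laplacian
iff it admits a weak SAMV Laplacian, and the two coincide; here a signed Radon measure is
encoded as a difference `ν₁ − ν₂` of measures finite on compact sets. -/
theorem stmt_9 {X : Type*} [MetricSpace X] [MeasurableSpace X] [BorelSpace X]
    [LocallyCompactSpace X]
    (μ : Measure X)
    (hμ : ∀ (x : X) (r : ℝ), 0 < r → 0 < μ (ball x r) ∧ μ (ball x r) < ∞)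
    (hz : ∃ r₁ : ℝ, 0 < r₁ ∧ ∀ r : ℝ, 0 < r → r < r₁ →
      LocallyIntegrable (fun x => zr μ x r) μ)
    (hweak : ∀ φ : X → ℝ, Continuous φ → HasCompactSupport φ →
      Tendsto (fun r => ∫ x, φ x * (zr μ x r / r) ∂μ) (𝓝[>] (0 : ℝ)) (𝓝 0))
    (u : X → ℝ) (K : ℝ≥0) (hu : LipschitzWith K u)
    (ν₁ ν₂ : Measure X) (hν₁ : IsFiniteMeasureOnCompacts ν₁)
    (hν₂ : IsFiniteMeasureOnCompacts ν₂) :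
    (∀ φ : X → ℝ, Continuous φ → HasCompactSupport φ →
      Tendsto (fun r => ∫ x, φ x * amvOp μ u x r ∂μ) (𝓝[>] (0 : ℝ))
        (𝓝 (∫ x, φ x ∂ν₁ - ∫ x, φ x ∂ν₂))) ↔
    (∀ φ : X → ℝ, Continuous φ → HasCompactSupport φ →
      Tendsto (fun r => ∫ x, φ x * samvOp μ u x r ∂μ) (𝓝[>] (0 : ℝ))
        (𝓝 (∫ x, φ x ∂ν₁ - ∫ x, φ x ∂ν₂))) := by
  obtain ⟨r₁, hr₁pos, hzloc⟩ := hz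
  rcases isEmpty_or_nonempty X with hX | hne
  · constructor <;> intro _ φ hφc hφs <;>
    · simp only [integral_of_isEmpty, sub_self]
      exact tendsto_const_nhds
  · obtain ⟨x₀⟩ := hne
    haveI hσ : SigmaFinite μ := aux_sigmaFinite μ x₀ fun n => (hμ x₀ _ (by positivity)).2
    haveI hsep : TopologicalSpace.SeparableSpace X :=
      aux_separable μ fun x r hr => (hμ x r hr).1
    haveI : SecondCountableTopology X := UniformSpace.secondCountable_of_separable X
    have key : ∀ φ : X → ℝ, Continuous φ → HasCompactSupport φ →
        Tendsto (fun r => (∫ x, φ x * samvOp μ u x r ∂μ) - ∫ x, φ x * amvOp μ u x r ∂μ)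
          (𝓝[>] (0 : ℝ)) (𝓝 0) := by
      intro φ hφc hφs
      have hφ₀c : Continuous fun x => (K : ℝ) / 2 * |φ x| := continuous_const.mul hφc.abs
      have hφ₀s : HasCompactSupport fun x => (K : ℝ) / 2 * |φ x| := by
        have := hφs.comp_left (g := fun t : ℝ => (K : ℝ) / 2 * |t|) (by simp)
        simpa [Function.comp_def] using this
      have hlim := hweak _ hφ₀c hφ₀s
      refine squeeze_zero_norm' ?_ hlim
      filter_upwards [Ioo_mem_nhdsGT_of_mem (left_mem_Ico.2 hr₁pos)] with r hr
      obtain ⟨hr0, hrr₁⟩ := hr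
      have hψint : Integrable (fun x => ((K : ℝ) / 2 * |φ x|) * (zr μ x r / r)) μ := by
        have hζ := hzloc r hr0 hrr₁
        have h2 := (hζ.integrable_smul_left_of_hasCompactSupport hφ₀c hφ₀s).const_mul (1 / r)
        refine h2.congr (Eventually.of_forall fun x => ?_)
        simp only [smul_eq_mul]
        ring
      exact aux_core μ x₀ hμ u K hu φ hφc r hr0 hψint
    constructor
    · intro h φ hφc hφs
      have h1 := h φ hφc hφs
      have h2 := key φ hφc hφs
      have h3 := h1.add h2
      rw [add_zero] at h3
      exact h3.congr fun r => by ring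
    · intro h φ hφc hφs
      have h1 := h φ hφc hφs
      have h2 := (key φ hφc hφs).neg
      rw [neg_zero] at h2
      have h3 := h1.add h2
      rw [add_zero] at h3
      exact h3.congr fun r => by ring
end

section
/- Let Q > 0 and let (X,d,μ) be a locally compact, locally Ahlfors Q-regular metric measure space. Set ω_Q := π^{Q/2}/Γ(Q/2 + 1) and θ_r(x) := μ(B_r(x))/(ω_Q r^Q). Assume that for every compactly supported continuous function φ on X, ∫_X φ · |1 − θ_r|/r dμ → 0 as r ↓ 0. Then a Lipschitz function u : X → ℝ admits a weak AMV Laplacian if and only if it admits a weak SAMV Laplacian, and in that case the two weak Laplacians coincide. -/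
open MeasureTheory Filter Metric Set Function
open scoped ENNReal Topology NNReal

/-- The normalized volume ratio `θ_r(x) = μ(B_r(x))/(ω_Q r^Q)`,
where `ω_Q = π^{Q/2}/Γ(Q/2+1)`. -/
noncomputable def thetaR {X : Type*} [MetricSpace X] [MeasurableSpace X]
    (μ : Measure X) (Q : ℝ) (x : X) (r : ℝ) : ℝ :=
  (μ (ball x r)).toReal / (Real.pi ^ (Q / 2) / Real.Gamma (Q / 2 + 1) * r ^ Q)

section Aux

variable {X : Type*} [MetricSpace X] [MeasurableSpace X] [BorelSpace X]

/-- lower semicontinuity of `x ↦ ∫⁻_{ball x r} g`. -/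
lemma lsc_lintegral_ball (μ : Measure X) {g : X → ℝ≥0∞} (hg : Measurable g) (r : ℝ) :
    LowerSemicontinuous (fun x => ∫⁻ y in ball x r, g y ∂μ) := by
  intro x t ht
  rcases le_or_gt r 0 with hr | hr
  · simp [ball_eq_empty.2 hr] at ht
  -- monotone convergence along radii `r - r/(n+1) ↑ r`
  have key : (∫⁻ y in ball x r, g y ∂μ)
      = ⨆ n : ℕ, ∫⁻ y in ball x (r - r / (n + 1)), g y ∂μ := by
    have hmono : Monotone fun n : ℕ => (ball x (r - r / (n + 1))).indicator g := by
      intro m n hmn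
      apply indicator_le_indicator_of_subset (ball_subset_ball _) (fun _ => zero_le)
      have h1 : r / (n + 1 : ℝ) ≤ r / (m + 1 : ℝ) := by
        apply div_le_div_of_nonneg_left hr.le (by positivity)
        exact_mod_cast by exact_mod_cast Nat.succ_le_succ hmn
      linarith
    have hset : ∀ y, (⨆ n : ℕ, (ball x (r - r / (n + 1))).indicator g y)
        = (ball x r).indicator g y := by
      intro y
      rcases lt_or_ge (dist y x) r with hy | hy
      · have : ∃ n : ℕ, dist y x < r - r / (n + 1) := by
          have : Tendsto (fun n : ℕ => r - r / (n + 1)) atTop (𝓝 (r - 0)) := by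
            exact tendsto_const_nhds.sub (tendsto_const_nhds.div_atTop
              (tendsto_atTop_add_const_right _ _ tendsto_natCast_atTop_atTop))
          rw [sub_zero] at this
          rcases (this.eventually (eventually_gt_nhds hy)).exists with ⟨n, hn⟩
          exact ⟨n, hn⟩
        rcases this with ⟨n, hn⟩
        apply le_antisymm
        · refine iSup_le fun m => indicator_le_indicator_of_subset
            (ball_subset_ball ?_) (fun _ => zero_le) y
          have : (0:ℝ) ≤ r / (m+1) := by positivity
          linarith
        · rw [indicator_of_mem (mem_ball.2 hy)]
          refine le_trans ?_ (le_iSup _ n)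
          rw [indicator_of_mem (mem_ball.2 hn)]
      · rw [indicator_of_notMem (by simpa [mem_ball] using not_lt.2 hy)]
        simp only [nonpos_iff_eq_zero, ENNReal.iSup_eq_zero]
        intro n
        have : ¬ y ∈ ball x (r - r / (n+1)) := by
          simp only [mem_ball, not_lt]
          have : r - r / (n+1) ≤ r := by
            have : 0 ≤ r / (n+1 : ℝ) := by positivity
            linarith
          linarith
        rw [indicator_of_notMem this]
    calc ∫⁻ y in ball x r, g y ∂μ = ∫⁻ y, (ball x r).indicator g y ∂μ := by
          rw [lintegral_indicator measurableSet_ball _]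
      _ = ∫⁻ y, ⨆ n : ℕ, (ball x (r - r / (n + 1))).indicator g y ∂μ := by
          simp_rw [hset]
      _ = ⨆ n : ℕ, ∫⁻ y, (ball x (r - r / (n + 1))).indicator g y ∂μ :=
          lintegral_iSup (fun n => hg.indicator measurableSet_ball) hmono
      _ = ⨆ n : ℕ, ∫⁻ y in ball x (r - r / (n + 1)), g y ∂μ := by
          simp_rw [lintegral_indicator measurableSet_ball _]
  simp only [] at ht
  rw [key] at ht
  rcases lt_iSup_iff.1 ht with ⟨n, hn⟩
  have hs : r - r / (n + 1) < r := by
    have : 0 < r / (n+1 : ℝ) := by positivity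
    linarith
  filter_upwards [ball_mem_nhds x (by linarith : (0:ℝ) < r - (r - r / (n+1)))] with x' hx'
  refine hn.trans_le (lintegral_mono_set ?_)
  intro y hy
  rw [mem_ball] at *
  calc dist y x' ≤ dist y x + dist x x' := dist_triangle _ _ _
    _ < (r - r/(n+1)) + (r - (r - r/(n+1))) := by
        rw [dist_comm] at hx'; exact add_lt_add hy hx'
    _ = r := by ring

lemma measurable_lintegral_ball (μ : Measure X) {g : X → ℝ≥0∞} (hg : Measurable g) (r : ℝ) :
    Measurable (fun x => ∫⁻ y in ball x r, g y ∂μ) :=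
  (lsc_lintegral_ball μ hg r).measurable

lemma measurable_measure_ball' (μ : Measure X) (r : ℝ) :
    Measurable (fun x => μ (ball x r)) := by
  have := measurable_lintegral_ball μ (measurable_const : Measurable fun _ : X => (1:ℝ≥0∞)) r
  simpa [setLIntegral_one] using this

lemma compact_measure_lt_top (μ : Measure X)
    (hμ : ∀ (x : X) (r : ℝ), 0 < r → 0 < μ (ball x r) ∧ μ (ball x r) < ∞)
    {W : Set X} (hW : IsCompact W) : μ W < ∞ := by
  rcases hW.elim_nhds_subcover (fun x => ball x 1)
      (fun x _ => ball_mem_nhds x one_pos) with ⟨t, -, ht⟩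
  calc μ W ≤ μ (⋃ x ∈ t, ball x 1) := measure_mono ht
    _ ≤ ∑ x ∈ t, μ (ball x 1) := measure_biUnion_finset_le t _
    _ < ∞ := ENNReal.sum_lt_top.2 fun x _ => (hμ x 1 one_pos).2

lemma uniform_ahlfors (μ : Measure X) (Q : ℝ)
    (hAhlfors : ∀ x₀ : X, ∃ V ∈ 𝓝 x₀, ∃ r₀ C : ℝ, 0 < r₀ ∧ 0 < C ∧
      ∀ x ∈ V, ∀ r : ℝ, 0 < r → r < r₀ →
        ENNReal.ofReal (C⁻¹ * r ^ Q) ≤ μ (ball x r) ∧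
        μ (ball x r) ≤ ENNReal.ofReal (C * r ^ Q))
    {W : Set X} (hW : IsCompact W) :
    ∃ r₀ C : ℝ, 0 < r₀ ∧ 1 ≤ C ∧ ∀ x ∈ W, ∀ r : ℝ, 0 < r → r < r₀ →
        ENNReal.ofReal (C⁻¹ * r ^ Q) ≤ μ (ball x r) ∧
        μ (ball x r) ≤ ENNReal.ofReal (C * r ^ Q) := by
  choose V hV r₀ C hr₀ hC hbound using hAhlfors
  rcases hW.elim_nhds_subcover (fun x => V x) (fun x _ => hV x) with ⟨t, -, ht⟩
  rcases t.eq_empty_or_nonempty with rfl | htne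
  · refine ⟨1, 1, one_pos, le_refl 1, fun x hx => absurd (ht hx) (by simp)⟩
  · set R := t.inf' htne (fun z => r₀ z) with hR
    set D := max 1 (t.sup' htne (fun z => C z)) with hD
    refine ⟨R, D, ?_, le_max_left _ _, ?_⟩
    · rcases Finset.exists_mem_eq_inf' htne (fun z => r₀ z) with ⟨z, hz, hzeq⟩
      rw [hR, hzeq]; exact hr₀ _
    · intro x hx s hs hsR
      rcases mem_iUnion₂.1 (ht hx) with ⟨z, hz, hxz⟩
      have hsz : s < r₀ z := lt_of_lt_of_le hsR (by
        rw [hR]; have hz' : z ∈ t := hz; exact Finset.inf'_le (fun w => r₀ (w:X)) hz')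
      have hb := hbound z x hxz s hs hsz
      have hCz : C z ≤ D := by
        rw [hD]; have hz' : z ∈ t := hz; exact le_trans (Finset.le_sup' (fun w => C (w:X)) hz') (le_max_right _ _)
      have hCzpos : 0 < C z := hC _
      have hs' : (0:ℝ) ≤ s ^ Q := le_of_lt (Real.rpow_pos_of_pos hs Q)
      constructor
      · refine le_trans (ENNReal.ofReal_le_ofReal ?_) hb.1
        apply mul_le_mul_of_nonneg_right _ hs'
        exact inv_anti₀ hCzpos hCz
      · refine le_trans hb.2 (ENNReal.ofReal_le_ofReal ?_)
        exact mul_le_mul_of_nonneg_right hCz hs'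

lemma swap_bound (μ : Measure X) {S W : Set X} (hSm : MeasurableSet S) (hWc : IsCompact W)
    (hSW : S ⊆ W) (hμW : μ W < ∞) (r : ℝ)
    (hballs : ∀ x ∈ S, ball x r ⊆ W)
    {w : X → ℝ≥0∞} (hw : Measurable w) :
    ∫⁻ x in S, ∫⁻ y in ball x r, w y ∂μ ∂μ = ∫⁻ y in W, w y * μ (ball y r ∩ S) ∂μ := by
  haveI : IsFiniteMeasure (μ.restrict W) := ⟨by rwa [Measure.restrict_apply_univ]⟩
  haveI : IsFiniteMeasure (μ.restrict S) :=
    ⟨by rw [Measure.restrict_apply_univ]; exact lt_of_le_of_lt (measure_mono hSW) hμW⟩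
  set f : X → X → ℝ≥0∞ := fun x y => (ball x r).indicator w y with hf
  -- the countable family of rectangles
  obtain ⟨c, hc_count, hWc_sub⟩ : ∃ c : Set X, c.Countable ∧ W ⊆ closure c :=
    hWc.isSeparable
  set U : Set (X × X) := ⋃ z ∈ c, ⋃ q : ℚ, (ball z (q:ℝ)) ×ˢ (ball z (r - (q:ℝ))) with hU
  have hUmeas : MeasurableSet U := by
    refine MeasurableSet.biUnion hc_count fun z _ => MeasurableSet.iUnion fun q => ?_
    exact measurableSet_ball.prod measurableSet_ball
  have hUsub : ∀ p : X × X, p ∈ U → dist p.2 p.1 < r := by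
    rintro ⟨x, y⟩ hp
    simp only [hU, mem_iUnion, mem_prod] at hp
    obtain ⟨z, hz, q, hx, hy⟩ := hp
    calc dist y x ≤ dist y z + dist z x := dist_triangle _ _ _
      _ < (r - q) + q := add_lt_add (mem_ball.1 hy) (by rw [dist_comm]; exact mem_ball.1 hx)
      _ = r := by ring
  have hUsup : ∀ p : X × X, p.1 ∈ W → dist p.2 p.1 < r → p ∈ U := by
    rintro ⟨x, y⟩ hxW hd
    simp only at hxW hd
    set ε := (r - dist y x) / 4 with hε
    have hεpos : 0 < ε := by simp only [hε]; linarith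
    obtain ⟨z, hzc, hz⟩ : ∃ z ∈ c, dist x z < ε := by
      have := hWc_sub hxW
      rcases Metric.mem_closure_iff.1 this ε hεpos with ⟨z, hz1, hz2⟩
      exact ⟨z, hz1, hz2⟩
    obtain ⟨q, hq1, hq2⟩ := exists_rat_btwn (show dist x z < 2*ε by linarith)
    simp only [hU, mem_iUnion, mem_prod]
    refine ⟨z, hzc, q, mem_ball.2 hq1, ?_⟩
    rw [mem_ball]
    calc dist y z ≤ dist y x + dist x z := dist_triangle _ _ _
      _ < dist y x + ε := by linarith
      _ ≤ r - (q:ℝ) := by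
          have : dist y x = r - 4*ε := by simp only [hε]; ring
          linarith
  have hmeasG : Measurable (U.indicator (fun p : X × X => w p.2)) :=
    (hw.comp measurable_snd).indicator hUmeas
  have haem : AEMeasurable (uncurry f) ((μ.restrict S).prod (μ.restrict W)) := by
    refine ⟨U.indicator (fun p : X × X => w p.2), hmeasG, ?_⟩
    have hnull : ((μ.restrict S).prod (μ.restrict W)) ((Wᶜ) ×ˢ (univ : Set X)) = 0 := by
      have hempty : Wᶜ ∩ S = ∅ := by
        ext x; simp only [mem_inter_iff, mem_compl_iff, mem_empty_iff_false, iff_false]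
        rintro ⟨h1, h2⟩; exact h1 (hSW h2)
      rw [Measure.prod_prod, Measure.restrict_apply (hWc.isClosed.measurableSet.compl),
        hempty]
      simp
    refine (ae_iff.2 ?_)
    refine measure_mono_null ?_ hnull
    intro p hp
    simp only [mem_setOf_eq] at hp
    simp only [mem_prod, mem_compl_iff, mem_univ, and_true]
    intro hpW
    apply hp
    by_cases hd : dist p.2 p.1 < r
    · have hmem : p ∈ U := hUsup p hpW hd
      have : p.2 ∈ ball p.1 r := mem_ball.2 hd
      simp only [uncurry, hf, indicator_of_mem this, indicator_of_mem hmem]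
    · have : p.2 ∉ ball p.1 r := by simpa [mem_ball] using hd
      have h2 : p ∉ U := fun hmem => hd (hUsub p hmem)
      simp only [uncurry, hf, indicator_of_notMem this, indicator_of_notMem h2]
  calc ∫⁻ x in S, ∫⁻ y in ball x r, w y ∂μ ∂μ
      = ∫⁻ x, ∫⁻ y, f x y ∂(μ.restrict W) ∂(μ.restrict S) := by
        refine setLIntegral_congr_fun hSm (fun x hx => ?_)
        rw [hf]
        simp only
        rw [lintegral_indicator measurableSet_ball, Measure.restrict_restrict measurableSet_ball,
          inter_eq_self_of_subset_left (hballs x hx)]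
    _ = ∫⁻ y, ∫⁻ x, f x y ∂(μ.restrict S) ∂(μ.restrict W) := lintegral_lintegral_swap haem
    _ = ∫⁻ y in W, w y * μ (ball y r ∩ S) ∂μ := by
        refine lintegral_congr fun y => ?_
        have : ∀ x, f x y = (ball y r).indicator (fun _ => w y) x := by
          intro x
          by_cases h : x ∈ ball y r
          · rw [indicator_of_mem h, hf]
            simp only
            rw [indicator_of_mem (mem_ball_comm.1 h)]
          · rw [indicator_of_notMem h, hf]
            simp only
            rw [indicator_of_notMem (fun h' => h (mem_ball_comm.1 h'))]
        simp_rw [this]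
        rw [lintegral_indicator_const measurableSet_ball,
          Measure.restrict_apply measurableSet_ball]

lemma integrable_of_bound_compact (μ : Measure X) {f : X → ℝ} {T : Set X}
    (hT : IsCompact T) (hμT : μ T < ∞) (hf : AEStronglyMeasurable f μ)
    (h0 : ∀ x ∉ T, f x = 0) {M : ℝ} (hM : ∀ x, |f x| ≤ M) : Integrable f μ := by
  have hsupp : support f ⊆ T := fun x hx => by
    by_contra h; exact hx (h0 x h)
  have : T.indicator f = f := indicator_eq_self.2 hsupp
  rw [← this, integrable_indicator_iff hT.isClosed.measurableSet]
  exact Measure.integrableOn_of_bounded hμT.ne hf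
    (ae_of_all _ fun x => by rw [Real.norm_eq_abs]; exact hM x)

/-- measurable representative of `x ↦ ∫ y in ball x r, v y`. -/
lemma exists_meas_setIntegral_ball (μ : Measure X) {v : X → ℝ} (hv : Measurable v) (r : ℝ) :
    ∃ F : X → ℝ, Measurable F ∧
      ∀ x, IntegrableOn v (ball x r) μ → F x = ∫ y in ball x r, v y ∂μ := by
  refine ⟨fun x => (∫⁻ y in ball x r, ENNReal.ofReal (v y) ∂μ).toReal
      - (∫⁻ y in ball x r, ENNReal.ofReal (-(v y)) ∂μ).toReal, ?_, fun x hx => ?_⟩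
  · exact ((measurable_lintegral_ball μ (ENNReal.measurable_ofReal.comp hv) r).ennreal_toReal).sub
      ((measurable_lintegral_ball μ (ENNReal.measurable_ofReal.comp hv.neg) r).ennreal_toReal)
  · exact (integral_eq_lintegral_pos_part_sub_lintegral_neg_part hx).symm

set_option maxHeartbeats 2000000 in
lemma key_diff [LocallyCompactSpace X] (μ : Measure X)
    (hμ : ∀ (x : X) (r : ℝ), 0 < r → 0 < μ (ball x r) ∧ μ (ball x r) < ∞)
    (Q : ℝ) (hQ : 0 < Q)
    (hAhlfors : ∀ x₀ : X, ∃ V ∈ 𝓝 x₀, ∃ r₀ C : ℝ, 0 < r₀ ∧ 0 < C ∧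
      ∀ x ∈ V, ∀ r : ℝ, 0 < r → r < r₀ →
        ENNReal.ofReal (C⁻¹ * r ^ Q) ≤ μ (ball x r) ∧
        μ (ball x r) ≤ ENNReal.ofReal (C * r ^ Q))
    (hweak : ∀ φ : X → ℝ, Continuous φ → HasCompactSupport φ →
      Tendsto (fun r => ∫ x, φ x * (|1 - thetaR μ Q x r| / r) ∂μ) (𝓝[>] (0 : ℝ)) (𝓝 0))
    (u : X → ℝ) (K : ℝ≥0) (hu : LipschitzWith K u)
    (φ : X → ℝ) (hφc : Continuous φ) (hφs : HasCompactSupport φ) :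
    Tendsto (fun r => (∫ x, φ x * samvOp μ u x r ∂μ) - ∫ x, φ x * amvOp μ u x r ∂μ)
      (𝓝[>] (0 : ℝ)) (𝓝 0) := by
  classical
  by_cases hSe : tsupport φ = ∅
  · have hzero : ∀ x, φ x = 0 := fun x => image_eq_zero_of_notMem_tsupport (by simp [hSe])
    have : (fun r : ℝ => (∫ x, φ x * samvOp μ u x r ∂μ) - ∫ x, φ x * amvOp μ u x r ∂μ)
        = fun _ => 0 := by
      funext r; simp [hzero]
    rw [this]; exact tendsto_const_nhds
  -- setup
  set S := tsupport φ with hSdef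
  have hS : IsCompact S := hφs
  have hSm : MeasurableSet S := (isClosed_tsupport φ).measurableSet
  obtain ⟨W, hWc, hSW⟩ := exists_compact_superset hS
  have hWm : MeasurableSet W := hWc.isClosed.measurableSet
  have hμW : μ W < ∞ := compact_measure_lt_top μ hμ hWc
  obtain ⟨r₀, C, hr₀, hC1, hAhl⟩ := uniform_ahlfors μ Q hAhlfors hWc
  have hCpos : (0:ℝ) < C := lt_of_lt_of_le one_pos hC1
  have hSWsub : S ⊆ W := hSW.trans interior_subset
  obtain ⟨δ, hδ, hδsub⟩ := hS.exists_thickening_subset_open isOpen_interior hSW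
  have hcth_sub : cthickening (δ/2) S ⊆ thickening δ S :=
    cthickening_subset_thickening' hδ (by linarith) S
  have hcthW : cthickening (δ/2) S ⊆ W := hcth_sub.trans (hδsub.trans interior_subset)
  have hcth : IsCompact (cthickening (δ/2) S) :=
    hWc.of_isClosed_subset isClosed_cthickening hcthW
  obtain ⟨ψ₀, hψ1, hψ0, hψcs, hψicc⟩ :=
    exists_continuous_one_zero_of_isCompact hcth (isOpen_thickening (δ := δ) (E := S)).isClosed_compl
      (disjoint_compl_right_iff_subset.2 hcth_sub)
  set ψ : X → ℝ := fun x => ψ₀ x with hψdef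
  have hψc : Continuous ψ := ψ₀.continuous
  have hψnn : ∀ x, 0 ≤ ψ x := fun x => (hψicc x).1
  have hψle1 : ∀ x, ψ x ≤ 1 := fun x => (hψicc x).2
  have hψW : ∀ x, ψ x ≠ 0 → x ∈ W := by
    intro x hx
    by_contra hxW
    refine hx ?_
    have : x ∈ (thickening δ S)ᶜ := fun hmem => hxW ((hδsub.trans interior_subset) hmem)
    simpa using hψ0 this
  -- bounds for φ and u
  obtain ⟨M, hM0, hM⟩ : ∃ M : ℝ, 0 ≤ M ∧ ∀ x, |φ x| ≤ M := by
    obtain ⟨M0, hM0b⟩ := (hS.image hφc.norm).bddAbove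
    refine ⟨max M0 0, le_max_right _ _, fun x => ?_⟩
    by_cases hx : x ∈ S
    · exact le_trans (le_of_eq (Real.norm_eq_abs (φ x)).symm)
        (le_trans (hM0b (mem_image_of_mem _ hx)) (le_max_left _ _))
    · simp [image_eq_zero_of_notMem_tsupport hx]
  obtain ⟨Mu, hMu⟩ : ∃ Mu : ℝ, ∀ x ∈ W, |u x| ≤ Mu := by
    obtain ⟨M0, hM0b⟩ := (hWc.image hu.continuous.norm).bddAbove
    exact ⟨M0, fun x hx => le_trans (le_of_eq (Real.norm_eq_abs (u x)).symm)
      (hM0b (mem_image_of_mem _ hx))⟩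
  set ω : ℝ := Real.pi ^ (Q / 2) / Real.Gamma (Q / 2 + 1) with hωdef
  have hωpos : 0 < ω :=
    div_pos (Real.rpow_pos_of_pos Real.pi_pos _) (Real.Gamma_pos_of_pos (by linarith))
  set cθ : ℝ := 1 + C / ω with hcθdef
  have hcθ0 : 0 ≤ cθ := by positivity
  set r₁ : ℝ := min r₀ (δ/2) with hr₁def
  have hr₁ : 0 < r₁ := lt_min hr₀ (by linarith)
  set c₁ : ℝ := (K:ℝ) * C * ω / 2 with hc₁def
  have hc₁0 : 0 ≤ c₁ := by positivity
  set c₂ : ℝ := c₁ * M * C * C with hc₂def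
  have hc₂0 : 0 ≤ c₂ := by positivity
  have main : ∀ r ∈ Ioo (0:ℝ) r₁,
      |(∫ x, φ x * samvOp μ u x r ∂μ) - ∫ x, φ x * amvOp μ u x r ∂μ|
        ≤ c₁ * (∫ x, |φ x| * (|1 - thetaR μ Q x r| / r) ∂μ)
          + c₂ * (∫ x, ψ x * (|1 - thetaR μ Q x r| / r) ∂μ) := by
    rintro r ⟨hr0, hrr₁⟩
    have hrr₀ : r < r₀ := lt_of_lt_of_le hrr₁ (min_le_left _ _)
    have hrδ : r ≤ δ/2 := le_of_lt (lt_of_lt_of_le hrr₁ (min_le_right _ _))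
    have hrQ : (0:ℝ) < r ^ Q := Real.rpow_pos_of_pos hr0 Q
    have hr2 : (0:ℝ) < r ^ 2 := by positivity
    set a : X → ℝ := fun x => (μ (ball x r)).toReal with hadef
    have ham : Measurable a := (measurable_measure_ball' μ r).ennreal_toReal
    have hapos : ∀ x, 0 < a x := fun x =>
      ENNReal.toReal_pos (hμ x r hr0).1.ne' (hμ x r hr0).2.ne
    have hafin : ∀ x, μ (ball x r) < ∞ := fun x => (hμ x r hr0).2
    have haW : ∀ x ∈ W, C⁻¹ * r ^ Q ≤ a x ∧ a x ≤ C * r ^ Q := by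
      intro x hx
      obtain ⟨h1, h2⟩ := hAhl x hx r hr0 hrr₀
      constructor
      · exact (ENNReal.ofReal_le_iff_le_toReal (hμ x r hr0).2.ne).1 h1
      · exact ENNReal.toReal_le_of_le_ofReal (by positivity) h2
    have hainv : ∀ x ∈ W, (a x)⁻¹ ≤ C / r ^ Q := by
      intro x hx
      calc (a x)⁻¹ ≤ (C⁻¹ * r ^ Q)⁻¹ :=
            inv_anti₀ (by positivity) (haW x hx).1
        _ = C / r ^ Q := by field_simp
    have hθ_eq : ∀ x, thetaR μ Q x r = a x / (ω * r ^ Q) := fun _ => rfl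
    have hθm : Measurable fun x => thetaR μ Q x r := by
      have : (fun x => thetaR μ Q x r) = fun x => a x / (ω * r ^ Q) := funext hθ_eq
      rw [this]; exact ham.div_const _
    have hθnn : ∀ x, 0 ≤ thetaR μ Q x r := fun x => by
      rw [hθ_eq]; exact div_nonneg ENNReal.toReal_nonneg (by positivity)
    have hθub : ∀ x ∈ W, thetaR μ Q x r ≤ C / ω := by
      intro x hx
      calc thetaR μ Q x r = a x / (ω * r ^ Q) := hθ_eq x
        _ ≤ (C * r ^ Q) / (ω * r ^ Q) :=
            div_le_div₀ (by positivity) (haW x hx).2 (by positivity) le_rfl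
        _ = C / ω := by
            rw [mul_comm C (r ^ Q), mul_comm ω (r ^ Q), mul_div_mul_left _ _ (ne_of_gt hrQ)]
    have hθW : ∀ x ∈ W, |1 - thetaR μ Q x r| ≤ cθ := by
      intro x hx
      rw [abs_le]
      have h1 := hθnn x
      have h2 := hθub x hx
      have h3 : 0 ≤ C / ω := by positivity
      constructor
      · simp only [hcθdef]; linarith
      · simp only [hcθdef]; linarith
    have hball : ∀ x ∈ S, ball x r ⊆ W := by
      intro x hx y hy
      refine (hδsub.trans interior_subset) (mem_thickening_iff.2 ⟨x, hx, ?_⟩)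
      exact lt_of_lt_of_le (mem_ball.1 hy) (by linarith)
    have hulip : ∀ x y, |u y - u x| ≤ (K:ℝ) * dist y x := fun x y => by
      have := hu.dist_le_mul y x
      rwa [Real.dist_eq] at this
    have hfb : ∀ x, ∀ y ∈ ball x r, |u y - u x| ≤ (K:ℝ) * r := fun x y hy =>
      le_trans (hulip x y) (mul_le_mul_of_nonneg_left (le_of_lt (mem_ball.1 hy)) K.coe_nonneg)
    have hmes_u : Measurable u := hu.continuous.measurable
    have hIntOn : ∀ (v : X → ℝ), Measurable v → ∀ (c : ℝ), (∀ y ∈ W, |v y| ≤ c) →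
        ∀ x ∈ S, IntegrableOn v (ball x r) μ := by
      intro v hv c hc x hx
      apply Measure.integrableOn_of_bounded (M := c) (hμ x r hr0).2.ne hv.aestronglyMeasurable
      refine (ae_restrict_iff' measurableSet_ball).2 (ae_of_all _ fun y hy => ?_)
      rw [Real.norm_eq_abs]; exact hc y (hball x hx hy)
    have hgb : ∀ x ∈ W, ∀ y ∈ W, 0 ≤ a x / a y ∧ a x / a y ≤ C * C := by
      intro x hx y hy
      constructor
      · exact div_nonneg ENNReal.toReal_nonneg ENNReal.toReal_nonneg
      · calc a x / a y ≤ (C * r ^ Q) / (C⁻¹ * r ^ Q) :=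
              div_le_div₀ (by positivity) (haW x hx).2 (by positivity) (haW y hy).1
          _ = C * C := by field_simp
    -- nonemptiness of S gives 0 ≤ Mu
    obtain ⟨x₀, hx₀⟩ : S.Nonempty := nonempty_iff_ne_empty.2 hSe
    have hMu0 : 0 ≤ Mu := le_trans (abs_nonneg _) (hMu x₀ (hSWsub hx₀))
    -- measurable representatives for the ball integrals
    obtain ⟨F₁, hF₁m, hF₁⟩ := exists_meas_setIntegral_ball μ hmes_u r
    obtain ⟨F₂, hF₂m, hF₂⟩ := exists_meas_setIntegral_ball μ (hmes_u.div ham) r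
    obtain ⟨F₃, hF₃m, hF₃⟩ := exists_meas_setIntegral_ball μ ham.inv r
    -- integrability on balls
    have hint_u : ∀ x ∈ S, IntegrableOn u (ball x r) μ :=
      hIntOn u hmes_u Mu hMu
    have hint_v : ∀ x ∈ S, IntegrableOn (fun y => u y / a y) (ball x r) μ := by
      refine hIntOn _ (hmes_u.div ham) (Mu * (C / r ^ Q)) fun y hy => ?_
      rw [abs_div, abs_of_pos (hapos y), div_eq_mul_inv]
      exact mul_le_mul (hMu y hy) (hainv y hy) (by positivity) hMu0
    have hint_inv : ∀ x ∈ S, IntegrableOn (fun y => (a y)⁻¹) (ball x r) μ := by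
      refine hIntOn _ ham.inv (C / r ^ Q) fun y hy => ?_
      rw [abs_of_nonneg (inv_nonneg.2 (hapos y).le)]
      exact hainv y hy
    have hint_f : ∀ x ∈ S, IntegrableOn (fun y => u y - u x) (ball x r) μ := by
      intro x hx
      refine hIntOn _ (hmes_u.sub measurable_const) (2 * Mu) (fun y hy => ?_) x hx
      have h1 := hMu y hy
      have h2 := hMu x (hSWsub hx)
      calc |u y - u x| ≤ |u y| + |u x| := abs_sub _ _
        _ ≤ 2 * Mu := by linarith
    have hfgW : ∀ x ∈ S, ∀ y ∈ W, |(u y - u x) * (a x / a y - 1)| ≤ 2 * Mu * (C * C + 1) := by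
      intro x hx y hy
      rw [abs_mul]
      have h1 : |u y - u x| ≤ 2 * Mu := by
        have := hMu y hy; have := hMu x (hSWsub hx)
        calc |u y - u x| ≤ |u y| + |u x| := abs_sub _ _
          _ ≤ 2 * Mu := by linarith
      have h2 : |a x / a y - 1| ≤ C * C + 1 := by
        obtain ⟨hg0, hgC⟩ := hgb x (hSWsub hx) y hy
        rw [abs_le]; constructor <;> linarith
      exact mul_le_mul h1 h2 (abs_nonneg _) (by linarith)
    have hint_fg : ∀ x ∈ S,
        IntegrableOn (fun y => (u y - u x) * (a x / a y - 1)) (ball x r) μ := by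
      intro x hx
      exact hIntOn _ ((hmes_u.sub measurable_const).mul
        ((measurable_const.div ham).sub measurable_const)) (2 * Mu * (C * C + 1))
        (hfgW x hx) x hx
    have hint_fg2 : ∀ x ∈ S,
        IntegrableOn (fun y => (u y - u x) * (a x / a y)) (ball x r) μ := by
      intro x hx
      refine hIntOn _ ((hmes_u.sub measurable_const).mul
        (measurable_const.div ham)) (2 * Mu * (C * C)) (fun y hy => ?_) x hx
      show |(u y - u x) * (a x / a y)| ≤ 2 * Mu * (C * C)
      rw [abs_mul]
      have h1 : |u y - u x| ≤ 2 * Mu := by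
        have := hMu y hy; have := hMu x (hSWsub hx)
        calc |u y - u x| ≤ |u y| + |u x| := abs_sub _ _
          _ ≤ 2 * Mu := by linarith
      obtain ⟨hg0, hgC⟩ := hgb x (hSWsub hx) y hy
      rw [abs_of_nonneg hg0]
      exact mul_le_mul h1 hgC (by linarith) (by linarith)
    have hint_absθ : ∀ x ∈ S, IntegrableOn (fun y => |1 - thetaR μ Q y r|) (ball x r) μ :=
      hIntOn _ ((measurable_const.sub hθm).abs) cθ (fun y hy => by
        rw [abs_abs]; exact hθW y hy)
    -- identities
    have hIeq : ∀ x ∈ S, ∫ y in ball x r, (u y - u x) ∂μ = F₁ x - u x * a x := by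
      intro x hx
      rw [integral_sub (hint_u x hx) (integrableOn_const (hafin x).ne),
        hF₁ x (hint_u x hx), setIntegral_const, smul_eq_mul, show μ.real (ball x r) = a x from rfl, mul_comm]
    have hsplit : ∀ x ∈ S, ∫ y in ball x r, (u y - u x) * (a x / a y) ∂μ
        = a x * F₂ x - (a x * u x) * F₃ x := by
      intro x hx
      have hcongr : ∀ y, (u y - u x) * (a x / a y)
          = a x * (u y / a y) - (a x * u x) * (a y)⁻¹ := fun y => by ring
      simp_rw [hcongr]
      rw [integral_sub ((hint_v x hx).const_mul (a x))
        ((hint_inv x hx).const_mul (a x * u x)),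
        integral_const_mul, integral_const_mul,
        hF₂ x (hint_v x hx), hF₃ x (hint_inv x hx)]
      rfl
    have hamv_eq : ∀ x ∈ S,
        amvOp μ u x r = (1 / r ^ 2) * ((a x)⁻¹ * (F₁ x - u x * a x)) := by
      intro x hx
      simp only [amvOp]
      rw [setAverage_eq, smul_eq_mul, show μ.real (ball x r) = a x from rfl, hIeq x hx]
    have hJeq : ∀ x ∈ S, ∫ y in ball x r, (u y - u x) * (1 + a x / a y) ∂μ
        = (F₁ x - u x * a x) + (a x * F₂ x - (a x * u x) * F₃ x) := by
      intro x hx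
      have hcongr : ∀ y, (u y - u x) * (1 + a x / a y)
          = (u y - u x) + (u y - u x) * (a x / a y) := fun y => by ring
      simp_rw [hcongr]
      rw [integral_add (hint_f x hx) (hint_fg2 x hx), hIeq x hx, hsplit x hx]
    have hsamv_eq : ∀ x ∈ S, samvOp μ u x r
        = (1 / (2 * r ^ 2)) * ((a x)⁻¹ *
            ((F₁ x - u x * a x) + (a x * F₂ x - (a x * u x) * F₃ x))) := by
      intro x hx
      simp only [samvOp]
      rw [setAverage_eq, smul_eq_mul, show μ.real (ball x r) = a x from rfl, hJeq x hx]
    have hEeq : ∀ x ∈ S, ∫ y in ball x r, (u y - u x) * (a x / a y - 1) ∂μ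
        = (a x * F₂ x - (a x * u x) * F₃ x) - (F₁ x - u x * a x) := by
      intro x hx
      have hcongr : ∀ y, (u y - u x) * (a x / a y - 1)
          = (u y - u x) * (a x / a y) - (u y - u x) := fun y => by ring
      simp_rw [hcongr]
      rw [integral_sub (hint_fg2 x hx) (hint_f x hx), hIeq x hx, hsplit x hx]
    have hdiff_eq : ∀ x ∈ S, samvOp μ u x r - amvOp μ u x r
        = (1 / (2 * r ^ 2)) * ((a x)⁻¹ *
            ∫ y in ball x r, (u y - u x) * (a x / a y - 1) ∂μ) := by
      intro x hx
      rw [hsamv_eq x hx, hamv_eq x hx, hEeq x hx]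
      field_simp
      ring
    -- pointwise bound for the integrand of `E`
    have hgθ : ∀ x ∈ S, ∀ y ∈ W, |a x / a y - 1|
        ≤ C * ω * (|1 - thetaR μ Q x r| + |1 - thetaR μ Q y r|) := by
      intro x hx y hy
      have hyane : a y ≠ 0 := (hapos y).ne'
      have h1 : a x / a y - 1 = (a x - a y) / a y := by field_simp
      have h2 : |a x - a y| ≤ (|1 - thetaR μ Q x r| + |1 - thetaR μ Q y r|) * (ω * r ^ Q) := by
        have hax : a x = thetaR μ Q x r * (ω * r ^ Q) := by
          rw [hθ_eq]; field_simp
        have hay : a y = thetaR μ Q y r * (ω * r ^ Q) := by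
          rw [hθ_eq]; field_simp
        rw [hax, hay, ← sub_mul, abs_mul, abs_of_pos (by positivity : (0:ℝ) < ω * r ^ Q)]
        apply mul_le_mul_of_nonneg_right _ (by positivity)
        calc |thetaR μ Q x r - thetaR μ Q y r|
            ≤ |thetaR μ Q x r - 1| + |1 - thetaR μ Q y r| := abs_sub_le _ _ _
          _ = |1 - thetaR μ Q x r| + |1 - thetaR μ Q y r| := by rw [abs_sub_comm]
      rw [h1, abs_div, abs_of_pos (hapos y), div_le_iff₀ (hapos y)]
      calc |a x - a y| ≤ (|1 - thetaR μ Q x r| + |1 - thetaR μ Q y r|) * (ω * r ^ Q) := h2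
        _ ≤ (|1 - thetaR μ Q x r| + |1 - thetaR μ Q y r|) * (ω * (C * a y)) := by
            apply mul_le_mul_of_nonneg_left _ (by positivity)
            apply mul_le_mul_of_nonneg_left _ hωpos.le
            calc r ^ Q = C * (C⁻¹ * r ^ Q) := by field_simp
              _ ≤ C * a y := mul_le_mul_of_nonneg_left (haW y hy).1 hCpos.le
        _ = C * ω * (|1 - thetaR μ Q x r| + |1 - thetaR μ Q y r|) * a y := by ring
    have hEb : ∀ x ∈ S, |∫ y in ball x r, (u y - u x) * (a x / a y - 1) ∂μ|
        ≤ (K:ℝ) * r * (C * ω) *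
          (|1 - thetaR μ Q x r| * a x + ∫ y in ball x r, |1 - thetaR μ Q y r| ∂μ) := by
      intro x hx
      have habs : |∫ y in ball x r, (u y - u x) * (a x / a y - 1) ∂μ|
          ≤ ∫ y in ball x r, |(u y - u x) * (a x / a y - 1)| ∂μ := by
        have := norm_integral_le_integral_norm (μ := μ.restrict (ball x r))
          (f := fun y => (u y - u x) * (a x / a y - 1))
        simpa only [Real.norm_eq_abs] using this
      refine le_trans habs ?_
      have hmono : ∫ y in ball x r, |(u y - u x) * (a x / a y - 1)| ∂μ
          ≤ ∫ y in ball x r, (K:ℝ) * r * (C * ω) *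
              (|1 - thetaR μ Q x r| + |1 - thetaR μ Q y r|) ∂μ := by
        apply setIntegral_mono_on ((hint_fg x hx).abs)
          (((integrableOn_const (hafin x).ne).add (hint_absθ x hx)).const_mul _)
          measurableSet_ball
        intro y hy
        rw [abs_mul]
        have h1 := hfb x y hy
        have h2 := hgθ x hx y (hball x hx hy)
        calc |u y - u x| * |a x / a y - 1|
            ≤ ((K:ℝ) * r) * (C * ω * (|1 - thetaR μ Q x r| + |1 - thetaR μ Q y r|)) :=
              mul_le_mul h1 h2 (abs_nonneg _) (by positivity)
          _ = (K:ℝ) * r * (C * ω) * (|1 - thetaR μ Q x r| + |1 - thetaR μ Q y r|) := by ring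
      refine le_trans hmono ?_
      rw [integral_const_mul,
        integral_add (integrableOn_const (hafin x).ne : IntegrableOn (fun _ => |1 - thetaR μ Q x r|) (ball x r) μ) (hint_absθ x hx),
        setIntegral_const, smul_eq_mul, show μ.real (ball x r) = a x from rfl, mul_comm (a x)]
    have hptwise : ∀ x ∈ S,
        |φ x * samvOp μ u x r - φ x * amvOp μ u x r|
          ≤ c₁ * (|φ x| * (|1 - thetaR μ Q x r| / r))
            + (c₁ * M * C / (r * r ^ Q)) * ∫ y in ball x r, |1 - thetaR μ Q y r| ∂μ := by
      intro x hx
      have hAne : a x ≠ 0 := (hapos x).ne'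
      set E := ∫ y in ball x r, (u y - u x) * (a x / a y - 1) ∂μ with hEdef
      set P := ∫ y in ball x r, |1 - thetaR μ Q y r| ∂μ with hPdef
      have hP0 : 0 ≤ P := integral_nonneg fun y => abs_nonneg _
      set t := |1 - thetaR μ Q x r| with htdef
      have ht0 : 0 ≤ t := abs_nonneg _
      have e1 : |φ x * samvOp μ u x r - φ x * amvOp μ u x r|
          = |φ x| * ((1 / (2 * r ^ 2)) * ((a x)⁻¹ * |E|)) := by
        rw [show φ x * samvOp μ u x r - φ x * amvOp μ u x r
            = φ x * (samvOp μ u x r - amvOp μ u x r) from by ring,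
          abs_mul, hdiff_eq x hx, abs_mul, abs_mul,
          abs_of_nonneg (by positivity : (0:ℝ) ≤ 1 / (2 * r ^ 2)),
          abs_of_nonneg (inv_nonneg.2 (hapos x).le)]
      rw [e1]
      calc |φ x| * ((1 / (2 * r ^ 2)) * ((a x)⁻¹ * |E|))
          ≤ |φ x| * ((1 / (2 * r ^ 2)) * ((a x)⁻¹ * ((K:ℝ) * r * (C * ω) * (t * a x + P)))) := by
            apply mul_le_mul_of_nonneg_left _ (abs_nonneg _)
            apply mul_le_mul_of_nonneg_left _ (by positivity)
            exact mul_le_mul_of_nonneg_left (hEb x hx) (inv_nonneg.2 (hapos x).le)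
        _ = (c₁ / r) * (|φ x| * t) + (c₁ / r) * (|φ x| * ((a x)⁻¹ * P)) := by
            rw [hc₁def]
            field_simp
        _ ≤ c₁ * (|φ x| * (t / r)) + (c₁ * M * C / (r * r ^ Q)) * P := by
            apply add_le_add
            · apply le_of_eq; ring
            · have hstep : |φ x| * ((a x)⁻¹ * P) ≤ M * ((C / r ^ Q) * P) := by
                apply mul_le_mul (hM x)
                  (mul_le_mul_of_nonneg_right (hainv x (hSWsub hx)) hP0)
                  (by positivity) hM0
              calc (c₁ / r) * (|φ x| * ((a x)⁻¹ * P))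
                  ≤ (c₁ / r) * (M * ((C / r ^ Q) * P)) :=
                    mul_le_mul_of_nonneg_left hstep (by positivity)
                _ = (c₁ * M * C / (r * r ^ Q)) * P := by
                    field_simp
    have hμS : μ S < ∞ := lt_of_le_of_lt (measure_mono hSWsub) hμW
    have hintabs : ∀ (v : X → ℝ) (G : X → ℝ), Measurable G → (∀ x ∈ S, v x = G x) →
        (∀ c : ℝ, 0 ≤ c → (∀ x ∈ S, |v x| ≤ c) → (∀ x ∉ S, v x = 0) → Integrable v μ) := by
      intro v G hGm hvG c hc hvc hv0
      have haesm : AEStronglyMeasurable v μ := by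
        have h1 : v = S.indicator v := by
          funext x
          by_cases hx : x ∈ S
          · rw [indicator_of_mem hx]
          · rw [indicator_of_notMem hx, hv0 x hx]
        rw [h1, aestronglyMeasurable_indicator_iff hSm]
        exact (hGm.aestronglyMeasurable.restrict).congr
          ((ae_restrict_iff' hSm).2 (ae_of_all _ fun x hx => (hvG x hx).symm))
      refine integrable_of_bound_compact μ hS hμS haesm hv0 (M := c) fun x => ?_
      by_cases hx : x ∈ S
      · exact hvc x hx
      · rw [hv0 x hx, abs_zero]; exact hc
    have hamv_bound : ∀ x ∈ S, |amvOp μ u x r| ≤ (K:ℝ) / r := by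
      intro x hx
      have hI : |∫ y in ball x r, (u y - u x) ∂μ| ≤ ((K:ℝ) * r) * a x := by
        have := norm_setIntegral_le_of_norm_le_const (μ := μ) (s := ball x r)
          (C := (K:ℝ) * r) (hμ x r hr0).2
          (fun y hy => by rw [Real.norm_eq_abs]; exact hfb x y hy)
        rw [Real.norm_eq_abs] at this
        exact this
      have hAne : a x ≠ 0 := (hapos x).ne'
      simp only [amvOp]
      rw [setAverage_eq, smul_eq_mul, show μ.real (ball x r) = a x from rfl, abs_mul, abs_mul,
        abs_of_nonneg (by positivity : (0:ℝ) ≤ 1 / r ^ 2),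
        abs_of_nonneg (inv_nonneg.2 (hapos x).le)]
      calc 1 / r ^ 2 * ((a x)⁻¹ * |∫ y in ball x r, (u y - u x) ∂μ|)
          ≤ 1 / r ^ 2 * ((a x)⁻¹ * (((K:ℝ) * r) * a x)) := by
            apply mul_le_mul_of_nonneg_left _ (by positivity)
            exact mul_le_mul_of_nonneg_left hI (inv_nonneg.2 (hapos x).le)
        _ = (K:ℝ) / r := by field_simp
      done
    have hsamv_bound : ∀ x ∈ S, |samvOp μ u x r| ≤ (K:ℝ) * (1 + C * C) / (2 * r) := by
      intro x hx
      have hI : |∫ y in ball x r, (u y - u x) * (1 + a x / a y) ∂μ|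
          ≤ ((K:ℝ) * r * (1 + C * C)) * a x := by
        have hb : ∀ y ∈ ball x r, ‖(u y - u x) * (1 + a x / a y)‖ ≤ (K:ℝ) * r * (1 + C * C) := by
          intro y hy
          rw [Real.norm_eq_abs, abs_mul]
          obtain ⟨hg0, hgC⟩ := hgb x (hSWsub hx) y (hball x hx hy)
          have h2 : |1 + a x / a y| ≤ 1 + C * C := by
            rw [abs_of_nonneg (by linarith)]; linarith
          exact mul_le_mul (hfb x y hy) h2 (abs_nonneg _) (by positivity)
        have hm : IntegrableOn (fun y => (u y - u x) * (1 + a x / a y)) (ball x r) μ := by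
          refine hIntOn _ ((hmes_u.sub measurable_const).mul
            (measurable_const.add (measurable_const.div ham))) (2 * Mu * (1 + C * C))
            (fun y hy => ?_) x hx
          show |(u y - u x) * (1 + a x / a y)| ≤ 2 * Mu * (1 + C * C)
          rw [abs_mul]
          have h1 : |u y - u x| ≤ 2 * Mu := by
            have := hMu y hy; have := hMu x (hSWsub hx)
            calc |u y - u x| ≤ |u y| + |u x| := abs_sub _ _
              _ ≤ 2 * Mu := by linarith
          obtain ⟨hg0, hgC⟩ := hgb x (hSWsub hx) y hy
          have h2 : |1 + a x / a y| ≤ 1 + C * C := by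
            rw [abs_of_nonneg (by linarith)]; linarith
          exact mul_le_mul h1 h2 (abs_nonneg _) (by linarith)
        have := norm_setIntegral_le_of_norm_le_const (μ := μ) (s := ball x r)
          (C := (K:ℝ) * r * (1 + C * C)) (hμ x r hr0).2 hb
        rw [Real.norm_eq_abs] at this
        exact this
      have hAne : a x ≠ 0 := (hapos x).ne'
      simp only [samvOp]
      rw [setAverage_eq, smul_eq_mul, show μ.real (ball x r) = a x from rfl, abs_mul, abs_mul,
        abs_of_nonneg (by positivity : (0:ℝ) ≤ 1 / (2 * r ^ 2)),
        abs_of_nonneg (inv_nonneg.2 (hapos x).le)]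
      calc 1 / (2 * r ^ 2) * ((a x)⁻¹ *
            |∫ y in ball x r, (u y - u x) * (1 + a x / a y) ∂μ|)
          ≤ 1 / (2 * r ^ 2) * ((a x)⁻¹ * (((K:ℝ) * r * (1 + C * C)) * a x)) := by
            apply mul_le_mul_of_nonneg_left _ (by positivity)
            exact mul_le_mul_of_nonneg_left hI (inv_nonneg.2 (hapos x).le)
        _ = (K:ℝ) * (1 + C * C) / (2 * r) := by field_simp
    have hInt_amv : Integrable (fun x => φ x * amvOp μ u x r) μ := by
      refine hintabs _ (fun x => φ x * ((1 / r ^ 2) * ((a x)⁻¹ * (F₁ x - u x * a x))))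
        (hφc.measurable.mul (measurable_const.mul (ham.inv.mul
          (hF₁m.sub (hmes_u.mul ham)))))
        (fun x hx => by rw [hamv_eq x hx]) (M * ((K:ℝ) / r)) (by positivity)
        (fun x hx => by
          rw [abs_mul]
          exact mul_le_mul (hM x) (hamv_bound x hx) (abs_nonneg _) hM0)
        (fun x hx => by rw [image_eq_zero_of_notMem_tsupport hx, zero_mul])
    have hInt_samv : Integrable (fun x => φ x * samvOp μ u x r) μ := by
      refine hintabs _ (fun x => φ x * ((1 / (2 * r ^ 2)) * ((a x)⁻¹ *
          ((F₁ x - u x * a x) + (a x * F₂ x - (a x * u x) * F₃ x)))))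
        (hφc.measurable.mul (measurable_const.mul (ham.inv.mul
          ((hF₁m.sub (hmes_u.mul ham)).add
            ((ham.mul hF₂m).sub ((ham.mul hmes_u).mul hF₃m))))))
        (fun x hx => by rw [hsamv_eq x hx]) (M * ((K:ℝ) * (1 + C * C) / (2 * r)))
        (by positivity)
        (fun x hx => by
          rw [abs_mul]
          exact mul_le_mul (hM x) (hsamv_bound x hx) (abs_nonneg _) hM0)
        (fun x hx => by rw [image_eq_zero_of_notMem_tsupport hx, zero_mul])
    have hA0 : 0 ≤ ∫ x, |φ x| * (|1 - thetaR μ Q x r| / r) ∂μ :=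
      integral_nonneg fun x => mul_nonneg (abs_nonneg _) (div_nonneg (abs_nonneg _) hr0.le)
    have hB0 : 0 ≤ ∫ x, ψ x * (|1 - thetaR μ Q x r| / r) ∂μ :=
      integral_nonneg fun x => mul_nonneg (hψnn x) (div_nonneg (abs_nonneg _) hr0.le)
    have hlin : (∫⁻ x, ENNReal.ofReal ‖φ x * samvOp μ u x r - φ x * amvOp μ u x r‖ ∂μ)
        ≤ ENNReal.ofReal (c₁ * (∫ x, |φ x| * (|1 - thetaR μ Q x r| / r) ∂μ))
          + ENNReal.ofReal (c₁ * M * C / (r * r ^ Q)) *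
            (ENNReal.ofReal (C * r ^ Q) *
              ENNReal.ofReal (r * (∫ x, ψ x * (|1 - thetaR μ Q x r| / r) ∂μ))) := by
      set w : X → ℝ≥0∞ := fun y => ENNReal.ofReal |1 - thetaR μ Q y r| with hwdef
      have hwm : Measurable w := ENNReal.measurable_ofReal.comp ((measurable_const.sub hθm).abs)
      have hg1m : Measurable fun x =>
          ENNReal.ofReal (c₁ * (|φ x| * (|1 - thetaR μ Q x r| / r))) :=
        ENNReal.measurable_ofReal.comp (measurable_const.mul
          (hφc.measurable.abs.mul (((measurable_const.sub hθm).abs).div_const r)))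
      have hPm : Measurable fun x => ∫⁻ y in ball x r, w y ∂μ :=
        measurable_lintegral_ball μ hwm r
      have hstep0 : (∫⁻ x, ENNReal.ofReal ‖φ x * samvOp μ u x r - φ x * amvOp μ u x r‖ ∂μ)
          = ∫⁻ x in S, ENNReal.ofReal ‖φ x * samvOp μ u x r - φ x * amvOp μ u x r‖ ∂μ := by
        rw [← lintegral_indicator hSm]
        congr 1; funext x
        by_cases hx : x ∈ S
        · rw [indicator_of_mem hx]
        · rw [indicator_of_notMem hx, image_eq_zero_of_notMem_tsupport hx]
          simp
      have hstep1 : ∫⁻ x in S, ENNReal.ofReal ‖φ x * samvOp μ u x r - φ x * amvOp μ u x r‖ ∂μ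
          ≤ ∫⁻ x in S, (ENNReal.ofReal (c₁ * (|φ x| * (|1 - thetaR μ Q x r| / r)))
              + ENNReal.ofReal (c₁ * M * C / (r * r ^ Q)) * ∫⁻ y in ball x r, w y ∂μ) ∂μ := by
        apply setLIntegral_mono (hg1m.add (measurable_const.mul hPm))
        intro x hx
        have h1 : ENNReal.ofReal ‖φ x * samvOp μ u x r - φ x * amvOp μ u x r‖
            ≤ ENNReal.ofReal (c₁ * (|φ x| * (|1 - thetaR μ Q x r| / r))
              + (c₁ * M * C / (r * r ^ Q)) * ∫ y in ball x r, |1 - thetaR μ Q y r| ∂μ) :=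
          ENNReal.ofReal_le_ofReal (by rw [Real.norm_eq_abs]; exact hptwise x hx)
        refine le_trans h1 (le_trans ENNReal.ofReal_add_le ?_)
        apply add_le_add le_rfl
        have h2 : ENNReal.ofReal ((c₁ * M * C / (r * r ^ Q))
              * ∫ y in ball x r, |1 - thetaR μ Q y r| ∂μ)
            = ENNReal.ofReal (c₁ * M * C / (r * r ^ Q)) * ∫⁻ y in ball x r, w y ∂μ := by
          rw [ENNReal.ofReal_mul (by positivity),
            ofReal_integral_eq_lintegral_ofReal (hint_absθ x hx)
              (ae_of_all _ fun y => abs_nonneg _)]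
        exact le_of_eq h2
      have hint1 : Integrable (fun x => c₁ * (|φ x| * (|1 - thetaR μ Q x r| / r))) μ := by
        refine hintabs _ (fun x => c₁ * (|φ x| * (|1 - thetaR μ Q x r| / r)))
          (measurable_const.mul
            (hφc.measurable.abs.mul (((measurable_const.sub hθm).abs).div_const r)))
          (fun x _ => rfl) (c₁ * (M * (cθ / r)))
          (mul_nonneg hc₁0 (mul_nonneg hM0 (div_nonneg hcθ0 hr0.le)))
          (fun x hx => ?_) (fun x hx => by rw [image_eq_zero_of_notMem_tsupport hx]; simp)
        rw [abs_of_nonneg (mul_nonneg hc₁0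
          (mul_nonneg (abs_nonneg _) (div_nonneg (abs_nonneg _) hr0.le)))]
        apply mul_le_mul_of_nonneg_left _ hc₁0
        exact mul_le_mul (hM x)
          ((div_le_div_iff_of_pos_right hr0).2 (hθW x (hSWsub hx)))
          (div_nonneg (abs_nonneg _) hr0.le) hM0
      have hT1 : ∫⁻ x in S, ENNReal.ofReal (c₁ * (|φ x| * (|1 - thetaR μ Q x r| / r))) ∂μ
          ≤ ENNReal.ofReal (c₁ * ∫ x, |φ x| * (|1 - thetaR μ Q x r| / r) ∂μ) := by
        refine le_trans (setLIntegral_le_lintegral _ _) (le_of_eq ?_)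
        rw [← ofReal_integral_eq_lintegral_ofReal hint1 (ae_of_all _ fun x =>
          mul_nonneg hc₁0 (mul_nonneg (abs_nonneg _) (div_nonneg (abs_nonneg _) hr0.le))),
          integral_const_mul]
      have hswap : ∫⁻ x in S, ∫⁻ y in ball x r, w y ∂μ ∂μ
          = ∫⁻ y in W, w y * μ (ball y r ∩ S) ∂μ :=
        swap_bound μ hSm hWc hSWsub hμW r hball hwm
      have hψint : Integrable (fun y => ψ y * |1 - thetaR μ Q y r|) μ := by
        refine integrable_of_bound_compact μ hψcs (compact_measure_lt_top μ hμ hψcs)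
          ((hψc.measurable.mul ((measurable_const.sub hθm).abs)).aestronglyMeasurable)
          (fun x hx => by
            have h : ψ x = 0 := image_eq_zero_of_notMem_tsupport hx
            rw [h, zero_mul]) (M := cθ) (fun x => ?_)
        by_cases hψx : ψ x = 0
        · rw [hψx, zero_mul, abs_zero]; exact hcθ0
        · rw [abs_mul, abs_abs, abs_of_nonneg (hψnn x)]
          calc ψ x * |1 - thetaR μ Q x r| ≤ 1 * cθ :=
                mul_le_mul (hψle1 x) (hθW x (hψW x hψx)) (abs_nonneg _) zero_le_one
            _ = cθ := one_mul _
      have hψmul : (∫ y, ψ y * |1 - thetaR μ Q y r| ∂μ)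
          = r * ∫ x, ψ x * (|1 - thetaR μ Q x r| / r) ∂μ := by
        have hc : ∀ y, ψ y * |1 - thetaR μ Q y r|
            = r * (ψ y * (|1 - thetaR μ Q y r| / r)) := fun y => by
          field_simp
        simp_rw [hc]
        rw [integral_const_mul]
      have hT2 : ∫⁻ y in W, w y * μ (ball y r ∩ S) ∂μ
          ≤ ENNReal.ofReal (C * r ^ Q)
            * ENNReal.ofReal (r * ∫ x, ψ x * (|1 - thetaR μ Q x r| / r) ∂μ) := by
        have hψθm : Measurable fun y => ENNReal.ofReal (ψ y * |1 - thetaR μ Q y r|) :=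
          ENNReal.measurable_ofReal.comp (hψc.measurable.mul ((measurable_const.sub hθm).abs))
        have hpt : ∀ y ∈ W, w y * μ (ball y r ∩ S)
            ≤ ENNReal.ofReal (C * r ^ Q)
              * ENNReal.ofReal (ψ y * |1 - thetaR μ Q y r|) := by
          intro y hyW
          rcases eq_empty_or_nonempty (ball y r ∩ S) with he | ⟨z, hz⟩
          · rw [he, measure_empty, mul_zero]; exact zero_le
          · have hyth : y ∈ cthickening (δ/2) S :=
              (cthickening_mono hrδ S) ((thickening_subset_cthickening r S)
                (mem_thickening_iff.2 ⟨z, hz.2, by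
                  rw [dist_comm]; exact mem_ball.1 hz.1⟩))
            have hψy : ψ y = 1 := hψ1 hyth
            have hμb : μ (ball y r ∩ S) ≤ ENNReal.ofReal (C * r ^ Q) :=
              le_trans (measure_mono inter_subset_left) (hAhl y hyW r hr0 hrr₀).2
            calc w y * μ (ball y r ∩ S) ≤ w y * ENNReal.ofReal (C * r ^ Q) :=
                  mul_le_mul_right hμb _
              _ = ENNReal.ofReal (C * r ^ Q)
                  * ENNReal.ofReal (ψ y * |1 - thetaR μ Q y r|) := by
                  rw [hψy, one_mul, mul_comm]
        calc ∫⁻ y in W, w y * μ (ball y r ∩ S) ∂μ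
            ≤ ∫⁻ y in W, ENNReal.ofReal (C * r ^ Q)
                * ENNReal.ofReal (ψ y * |1 - thetaR μ Q y r|) ∂μ :=
              setLIntegral_mono (measurable_const.mul hψθm) hpt
          _ = ENNReal.ofReal (C * r ^ Q)
              * ∫⁻ y in W, ENNReal.ofReal (ψ y * |1 - thetaR μ Q y r|) ∂μ :=
              lintegral_const_mul _ hψθm
          _ ≤ ENNReal.ofReal (C * r ^ Q)
              * ∫⁻ y, ENNReal.ofReal (ψ y * |1 - thetaR μ Q y r|) ∂μ :=
              mul_le_mul_right (setLIntegral_le_lintegral _ _) _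
          _ = ENNReal.ofReal (C * r ^ Q)
              * ENNReal.ofReal (∫ y, ψ y * |1 - thetaR μ Q y r| ∂μ) := by
              rw [ofReal_integral_eq_lintegral_ofReal hψint
                (ae_of_all _ fun y => mul_nonneg (hψnn y) (abs_nonneg _))]
          _ = ENNReal.ofReal (C * r ^ Q)
              * ENNReal.ofReal (r * ∫ x, ψ x * (|1 - thetaR μ Q x r| / r) ∂μ) := by
              rw [hψmul]
      calc (∫⁻ x, ENNReal.ofReal ‖φ x * samvOp μ u x r - φ x * amvOp μ u x r‖ ∂μ)
          = ∫⁻ x in S, ENNReal.ofReal ‖φ x * samvOp μ u x r - φ x * amvOp μ u x r‖ ∂μ :=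
            hstep0
        _ ≤ ∫⁻ x in S, (ENNReal.ofReal (c₁ * (|φ x| * (|1 - thetaR μ Q x r| / r)))
              + ENNReal.ofReal (c₁ * M * C / (r * r ^ Q))
                * ∫⁻ y in ball x r, w y ∂μ) ∂μ := hstep1
        _ = (∫⁻ x in S, ENNReal.ofReal (c₁ * (|φ x| * (|1 - thetaR μ Q x r| / r))) ∂μ)
              + ∫⁻ x in S, ENNReal.ofReal (c₁ * M * C / (r * r ^ Q))
                * ∫⁻ y in ball x r, w y ∂μ ∂μ :=
            lintegral_add_left hg1m _
        _ = (∫⁻ x in S, ENNReal.ofReal (c₁ * (|φ x| * (|1 - thetaR μ Q x r| / r))) ∂μ)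
              + ENNReal.ofReal (c₁ * M * C / (r * r ^ Q))
                * ∫⁻ x in S, ∫⁻ y in ball x r, w y ∂μ ∂μ := by
            rw [lintegral_const_mul _ hPm]
        _ ≤ ENNReal.ofReal (c₁ * (∫ x, |φ x| * (|1 - thetaR μ Q x r| / r) ∂μ))
              + ENNReal.ofReal (c₁ * M * C / (r * r ^ Q)) *
                (ENNReal.ofReal (C * r ^ Q) *
                  ENNReal.ofReal (r * (∫ x, ψ x * (|1 - thetaR μ Q x r| / r) ∂μ))) := by
            apply add_le_add hT1
            rw [hswap]
            exact mul_le_mul_right hT2 _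
    calc |(∫ x, φ x * samvOp μ u x r ∂μ) - ∫ x, φ x * amvOp μ u x r ∂μ|
        = ‖∫ x, (φ x * samvOp μ u x r - φ x * amvOp μ u x r) ∂μ‖ := by
          rw [integral_sub hInt_samv hInt_amv, Real.norm_eq_abs]
      _ ≤ (∫⁻ x, ENNReal.ofReal ‖φ x * samvOp μ u x r - φ x * amvOp μ u x r‖ ∂μ).toReal :=
          norm_integral_le_lintegral_norm _
      _ ≤ (ENNReal.ofReal (c₁ * (∫ x, |φ x| * (|1 - thetaR μ Q x r| / r) ∂μ))
          + ENNReal.ofReal (c₁ * M * C / (r * r ^ Q)) *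
            (ENNReal.ofReal (C * r ^ Q) *
              ENNReal.ofReal (r * (∫ x, ψ x * (|1 - thetaR μ Q x r| / r) ∂μ)))).toReal := by
          apply ENNReal.toReal_mono ?_ hlin
          refine (ENNReal.add_ne_top.2 ⟨ENNReal.ofReal_ne_top, ?_⟩)
          exact (ENNReal.mul_ne_top ENNReal.ofReal_ne_top
            (ENNReal.mul_ne_top ENNReal.ofReal_ne_top ENNReal.ofReal_ne_top))
      _ = c₁ * (∫ x, |φ x| * (|1 - thetaR μ Q x r| / r) ∂μ)
          + c₂ * (∫ x, ψ x * (|1 - thetaR μ Q x r| / r) ∂μ) := by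
          rw [← ENNReal.ofReal_mul (by positivity),
            ← ENNReal.ofReal_mul (by positivity),
            ← ENNReal.ofReal_add (by positivity)
              (by positivity),
            ENNReal.toReal_ofReal (by positivity)]
          rw [hc₂def]
          field_simp
  have hA := hweak (fun x => |φ x|) hφc.abs (hφs.comp_left (g := fun t : ℝ => |t|) abs_zero)
  have hB := hweak ψ hψc hψcs
  have hg : Tendsto (fun r => c₁ * (∫ x, |φ x| * (|1 - thetaR μ Q x r| / r) ∂μ)
      + c₂ * (∫ x, ψ x * (|1 - thetaR μ Q x r| / r) ∂μ)) (𝓝[>] (0:ℝ)) (𝓝 0) := by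
    have := (hA.const_mul c₁).add (hB.const_mul c₂)
    simpa using this
  refine squeeze_zero_norm' ?_ hg
  filter_upwards [Ioo_mem_nhdsGT hr₁] with r hr
  rw [Real.norm_eq_abs]
  exact main r hr

end Aux

/-- On a locally compact, locally Ahlfors `Q`-regular metric measure space
such that `|1 − θ_r|/r · μ ⇀ 0` as `r ↓ 0`, a Lipschitz function admits a weak AMV Laplacian
iff it admits a weak SAMV Laplacian, and the two coincide; a signed Radon measure is encoded
as a difference `ν₁ − ν₂` of measures finite on compact sets. -/
theorem stmt_12 {X : Type*} [MetricSpace X] [MeasurableSpace X] [BorelSpace X]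
    [LocallyCompactSpace X]
    (μ : Measure X)
    (hμ : ∀ (x : X) (r : ℝ), 0 < r → 0 < μ (ball x r) ∧ μ (ball x r) < ∞)
    (Q : ℝ) (hQ : 0 < Q)
    (hAhlfors : ∀ x₀ : X, ∃ V ∈ 𝓝 x₀, ∃ r₀ C : ℝ, 0 < r₀ ∧ 0 < C ∧
      ∀ x ∈ V, ∀ r : ℝ, 0 < r → r < r₀ →
        ENNReal.ofReal (C⁻¹ * r ^ Q) ≤ μ (ball x r) ∧
        μ (ball x r) ≤ ENNReal.ofReal (C * r ^ Q))
    (hweak : ∀ φ : X → ℝ, Continuous φ → HasCompactSupport φ →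
      Tendsto (fun r => ∫ x, φ x * (|1 - thetaR μ Q x r| / r) ∂μ) (𝓝[>] (0 : ℝ)) (𝓝 0))
    (u : X → ℝ) (K : ℝ≥0) (hu : LipschitzWith K u)
    (ν₁ ν₂ : Measure X) (hν₁ : IsFiniteMeasureOnCompacts ν₁)
    (hν₂ : IsFiniteMeasureOnCompacts ν₂) :
    (∀ φ : X → ℝ, Continuous φ → HasCompactSupport φ →
      Tendsto (fun r => ∫ x, φ x * amvOp μ u x r ∂μ) (𝓝[>] (0 : ℝ))
        (𝓝 (∫ x, φ x ∂ν₁ - ∫ x, φ x ∂ν₂))) ↔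
    (∀ φ : X → ℝ, Continuous φ → HasCompactSupport φ →
      Tendsto (fun r => ∫ x, φ x * samvOp μ u x r ∂μ) (𝓝[>] (0 : ℝ))
        (𝓝 (∫ x, φ x ∂ν₁ - ∫ x, φ x ∂ν₂))) := by
  constructor
  · intro h φ hc hs
    have h2 := (h φ hc hs).add (key_diff μ hμ Q hQ hAhlfors hweak u K hu φ hc hs)
    simp only [add_zero] at h2
    exact h2.congr (fun r => by ring)
  · intro h φ hc hs
    have h2 := (h φ hc hs).sub (key_diff μ hμ Q hQ hAhlfors hweak u K hu φ hc hs)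
    simp only [sub_zero] at h2
    exact h2.congr (fun r => by ring)
end
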